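/- arXiv:1504.04933 — 9 statements merged into one kernel-verified Lean document; each statement's English description precedes it below -/
import Mathlib

section
/- Let k,n ≥ 1 and let y₁,…,y_{2k} ∈ ℝⁿ. Define x_{i,j} = ⟨y_i, y_j⟩, and for 1 ≤ i < j ≤ 2k define Q_{i,j} = Σ_{ℓ=1}^{k} (x_{i,2ℓ-1}·x_{j,2ℓ} − x_{i,2ℓ}·x_{j,2ℓ-1}). Also for 1 ≤ α < β ≤ n define J_{α,β} = Σ_{ℓ=1}^{k} (y_{2ℓ-1,α}·y_{2ℓ,β} − y_{2ℓ-1,β}·y_{2ℓ,α}). Then Σ_{ℓ=1}^{k} Q_{2ℓ-1,2ℓ} = Σ_{1 ≤ α < β ≤ n} J_{α,β}². -/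
open Finset

/-- Index of `y_{2ℓ-1}` (0-based) among the `2k` vectors. -/
def oddIdx {k : ℕ} (ℓ : Fin k) : Fin (2*k) := ⟨2*ℓ.val, by have := ℓ.isLt; omega⟩

/-- Index of `y_{2ℓ}` (0-based) among the `2k` vectors. -/
def evenIdx {k : ℕ} (ℓ : Fin k) : Fin (2*k) := ⟨2*ℓ.val+1, by have := ℓ.isLt; omega⟩

/-- Euclidean inner product on `ℝⁿ`. -/
noncomputable def ip {n : ℕ} (u v : Fin n → ℝ) : ℝ := ∑ α, u α * v α

/-- The quadratic invariant `Q_{i,j} = Σ_ℓ (x_{i,2ℓ-1} x_{j,2ℓ} - x_{i,2ℓ} x_{j,2ℓ-1})`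
where `x_{i,j} = ⟨y_i, y_j⟩`. -/
noncomputable def Qinv {k n : ℕ} (y : Fin (2*k) → Fin n → ℝ) (i j : Fin (2*k)) : ℝ :=
  ∑ ℓ : Fin k, (ip (y i) (y (oddIdx ℓ)) * ip (y j) (y (evenIdx ℓ))
    - ip (y i) (y (evenIdx ℓ)) * ip (y j) (y (oddIdx ℓ)))

/-- The angular momentum component `J_{α,β}`. -/
noncomputable def angJ {k n : ℕ} (y : Fin (2*k) → Fin n → ℝ) (α β : Fin n) : ℝ :=
  ∑ ℓ : Fin k, (y (oddIdx ℓ) α * y (evenIdx ℓ) β - y (oddIdx ℓ) β * y (evenIdx ℓ) α)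


lemma sep {n : ℕ} (f g : Fin n → ℝ) :
    ∑ α : Fin n, ∑ β : Fin n, f α * g β = (∑ α, f α) * (∑ α, g α) :=
  (Finset.sum_mul_sum _ _ _ _).symm

lemma expand4 {n : ℕ} (A B C D : Fin n → ℝ) :
    ∑ α : Fin n, ∑ β : Fin n, (A α * B β - A β * B α) * (C α * D β - C β * D α)
    = 2 * ((∑ α, A α * C α) * (∑ α, B α * D α)
        - (∑ α, A α * D α) * (∑ α, B α * C α)) := by
  have h : ∑ α : Fin n, ∑ β : Fin n, (A α * B β - A β * B α) * (C α * D β - C β * D α)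
      = (∑ α : Fin n, ∑ β : Fin n, (A α * C α) * (B β * D β))
      - (∑ α : Fin n, ∑ β : Fin n, (A α * D α) * (B β * C β))
      - (∑ α : Fin n, ∑ β : Fin n, (B α * C α) * (A β * D β))
      + (∑ α : Fin n, ∑ β : Fin n, (B α * D α) * (A β * C β)) := by
    simp only [← Finset.sum_sub_distrib, ← Finset.sum_add_distrib]
    refine Finset.sum_congr rfl fun α _ => Finset.sum_congr rfl fun β _ => by ring
  rw [h, sep, sep, sep, sep]; ring

lemma double_anti {n : ℕ} (f : Fin n → Fin n → ℝ)
    (hsymm : ∀ a b, f b a = f a b) (hd : ∀ a, f a a = 0) :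
    ∑ a : Fin n, ∑ b : Fin n, f a b
      = 2 * ∑ a : Fin n, ∑ b ∈ Finset.univ.filter (fun b => a < b), f a b := by
  have h1 : ∀ a b : Fin n, f a b
      = (if a < b then f a b else 0) + (if b < a then f a b else 0) := by
    intro a b
    rcases lt_trichotomy a b with h | h | h
    · simp [h, not_lt_of_gt h]
    · subst h; simp [hd]
    · simp [h, not_lt_of_gt h]
  calc ∑ a : Fin n, ∑ b : Fin n, f a b
      = (∑ a : Fin n, ∑ b : Fin n, if a < b then f a b else 0)
        + (∑ a : Fin n, ∑ b : Fin n, if b < a then f a b else 0) := by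
        rw [← Finset.sum_add_distrib]
        refine Finset.sum_congr rfl fun a _ => ?_
        rw [← Finset.sum_add_distrib]
        exact Finset.sum_congr rfl fun b _ => h1 a b
    _ = 2 * ∑ a : Fin n, ∑ b ∈ Finset.univ.filter (fun b => a < b), f a b := by
        have h2 : (∑ a : Fin n, ∑ b : Fin n, if b < a then f a b else 0)
            = ∑ a : Fin n, ∑ b : Fin n, if a < b then f a b else 0 := by
          rw [Finset.sum_comm]
          exact Finset.sum_congr rfl fun a _ => Finset.sum_congr rfl fun b _ => by
            rcases lt_or_ge a b with h | h
            · simp [h, hsymm]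
            · simp [not_lt_of_ge h]
        rw [h2]
        simp only [Finset.sum_filter]
        ring

lemma swap4 {n k : ℕ} (F : Fin n → Fin n → Fin k → Fin k → ℝ) :
    ∑ a : Fin n, ∑ b : Fin n, ∑ m : Fin k, ∑ ℓ : Fin k, F a b m ℓ
      = ∑ m : Fin k, ∑ ℓ : Fin k, ∑ a : Fin n, ∑ b : Fin n, F a b m ℓ :=
  calc ∑ a : Fin n, ∑ b : Fin n, ∑ m : Fin k, ∑ ℓ : Fin k, F a b m ℓ
      = ∑ a : Fin n, ∑ m : Fin k, ∑ b : Fin n, ∑ ℓ : Fin k, F a b m ℓ :=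
        Finset.sum_congr rfl fun a _ => Finset.sum_comm
    _ = ∑ m : Fin k, ∑ a : Fin n, ∑ b : Fin n, ∑ ℓ : Fin k, F a b m ℓ := Finset.sum_comm
    _ = ∑ m : Fin k, ∑ a : Fin n, ∑ ℓ : Fin k, ∑ b : Fin n, F a b m ℓ :=
        Finset.sum_congr rfl fun m _ => Finset.sum_congr rfl fun a _ => Finset.sum_comm
    _ = ∑ m : Fin k, ∑ ℓ : Fin k, ∑ a : Fin n, ∑ b : Fin n, F a b m ℓ :=
        Finset.sum_congr rfl fun m _ => Finset.sum_comm

/-- `Σ_{ℓ=1}^k Q_{2ℓ-1,2ℓ} = Σ_{α<β} J_{α,β}²`. -/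
theorem sum_Q_eq_sum_J_sq (k n : ℕ) (hk : 1 ≤ k) (hn : 1 ≤ n)
    (y : Fin (2*k) → Fin n → ℝ) :
    ∑ ℓ : Fin k, Qinv y (oddIdx ℓ) (evenIdx ℓ)
      = ∑ α : Fin n, ∑ β ∈ Finset.univ.filter (fun β => α < β), (angJ y α β)^2 := by
  have hanti : ∀ a b : Fin n, angJ y b a = - angJ y a b := by
    intro a b
    simp only [angJ, ← Finset.sum_neg_distrib]
    exact Finset.sum_congr rfl fun ℓ _ => by ring
  have hdd : ∑ a : Fin n, ∑ b : Fin n, (angJ y a b)^2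
      = 2 * ∑ α : Fin n, ∑ β ∈ Finset.univ.filter (fun β => α < β), (angJ y α β)^2 := by
    refine double_anti _ (fun a b => by rw [hanti]; ring) (fun a => ?_)
    have : angJ y a a = 0 := by simp [angJ]
    simp [this]
  have hsq : ∀ a b : Fin n, (angJ y a b)^2
      = ∑ m : Fin k, ∑ ℓ : Fin k,
          (y (oddIdx m) a * y (evenIdx m) b - y (oddIdx m) b * y (evenIdx m) a)
          * (y (oddIdx ℓ) a * y (evenIdx ℓ) b - y (oddIdx ℓ) b * y (evenIdx ℓ) a) := by
    intro a b
    rw [sq, angJ, Finset.sum_mul_sum]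
  have key : ∑ a : Fin n, ∑ b : Fin n, (angJ y a b)^2
      = 2 * ∑ ℓ : Fin k, Qinv y (oddIdx ℓ) (evenIdx ℓ) := by
    calc ∑ a : Fin n, ∑ b : Fin n, (angJ y a b)^2
        = ∑ a : Fin n, ∑ b : Fin n, ∑ m : Fin k, ∑ ℓ : Fin k,
            (y (oddIdx m) a * y (evenIdx m) b - y (oddIdx m) b * y (evenIdx m) a)
            * (y (oddIdx ℓ) a * y (evenIdx ℓ) b - y (oddIdx ℓ) b * y (evenIdx ℓ) a) := by
          exact Finset.sum_congr rfl fun a _ => Finset.sum_congr rfl fun b _ => hsq a b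
      _ = ∑ m : Fin k, ∑ ℓ : Fin k, ∑ a : Fin n, ∑ b : Fin n,
            (y (oddIdx m) a * y (evenIdx m) b - y (oddIdx m) b * y (evenIdx m) a)
            * (y (oddIdx ℓ) a * y (evenIdx ℓ) b - y (oddIdx ℓ) b * y (evenIdx ℓ) a) :=
          swap4 _
      _ = ∑ m : Fin k, ∑ ℓ : Fin k,
            2 * (ip (y (oddIdx m)) (y (oddIdx ℓ)) * ip (y (evenIdx m)) (y (evenIdx ℓ))
              - ip (y (oddIdx m)) (y (evenIdx ℓ)) * ip (y (evenIdx m)) (y (oddIdx ℓ))) := by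
          exact Finset.sum_congr rfl fun m _ => Finset.sum_congr rfl fun ℓ _ =>
            expand4 (y (oddIdx m)) (y (evenIdx m)) (y (oddIdx ℓ)) (y (evenIdx ℓ))
      _ = 2 * ∑ ℓ : Fin k, Qinv y (oddIdx ℓ) (evenIdx ℓ) := by
          simp only [Qinv, Finset.mul_sum]
  linarith [hdd, key]
end

section
/- Let k ≥ 1 and n ≥ 1, and let y₁,…,y_{2k} ∈ ℝⁿ. With Q_{i,j} and J_{α,β} defined as the quadratic invariant combinations Q_{i,j} = Σ_{ℓ=1}^{k}(⟨y_i,y_{2ℓ-1}⟩⟨y_j,y_{2ℓ}⟩ − ⟨y_i,y_{2ℓ}⟩⟨y_j,y_{2ℓ-1}⟩) and J_{α,β} = Σ_{ℓ=1}^{k}(y_{2ℓ-1,α} y_{2ℓ,β} − y_{2ℓ-1,β} y_{2ℓ,α}), the following are equivalent: (i) Q_{2ℓ-1,2ℓ}(y) = 0 for all 1 ≤ ℓ ≤ k; (ii) Q_{i,j}(y) = 0 for all 1 ≤ i < j ≤ 2k; (iii) J_{α,β}(y) = 0 for all 1 ≤ α < β ≤ n. -/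
open Finset

lemma angJ_anti {k n : ℕ} (y : Fin (2*k) → Fin n → ℝ) (α β : Fin n) :
    angJ y α β = - angJ y β α := by
  unfold angJ
  rw [← Finset.sum_neg_distrib]
  exact Finset.sum_congr rfl fun ℓ _ => by ring

lemma Qinv_eq {k n : ℕ} (y : Fin (2*k) → Fin n → ℝ) (i j : Fin (2*k)) :
    Qinv y i j = ∑ α, ∑ β, y i α * y j β * angJ y α β := by
  have perℓ : ∀ ℓ : Fin k,
      ip (y i) (y (oddIdx ℓ)) * ip (y j) (y (evenIdx ℓ))
        - ip (y i) (y (evenIdx ℓ)) * ip (y j) (y (oddIdx ℓ))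
      = ∑ α, ∑ β, y i α * y j β *
          (y (oddIdx ℓ) α * y (evenIdx ℓ) β - y (oddIdx ℓ) β * y (evenIdx ℓ) α) := by
    intro ℓ
    unfold ip
    rw [Finset.sum_mul_sum, Finset.sum_mul_sum, ← Finset.sum_sub_distrib]
    refine Finset.sum_congr rfl fun α _ => ?_
    rw [← Finset.sum_sub_distrib]
    exact Finset.sum_congr rfl fun β _ => by ring
  unfold Qinv
  simp only [perℓ]
  rw [Finset.sum_comm]
  refine Finset.sum_congr rfl fun α _ => ?_
  rw [Finset.sum_comm]
  refine Finset.sum_congr rfl fun β _ => ?_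
  rw [angJ, Finset.mul_sum]

lemma key_swap {k n : ℕ} (y : Fin (2*k) → Fin n → ℝ) (q p : Fin n → ℝ) :
    ∑ α, ∑ β, q β * p α * angJ y α β = - ∑ α, ∑ β, q α * p β * angJ y α β := by
  rw [Finset.sum_comm, ← Finset.sum_neg_distrib]
  refine Finset.sum_congr rfl fun α _ => ?_
  rw [← Finset.sum_neg_distrib]
  refine Finset.sum_congr rfl fun β _ => ?_
  rw [angJ_anti y β α]
  ring

lemma sumJ_sq {k n : ℕ} (y : Fin (2*k) → Fin n → ℝ) :
    ∑ α : Fin n, ∑ β : Fin n, angJ y α β * angJ y α β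
      = 2 * ∑ ℓ : Fin k, Qinv y (oddIdx ℓ) (evenIdx ℓ) := by
  have expand : ∑ α : Fin n, ∑ β : Fin n, angJ y α β * angJ y α β
      = ∑ α : Fin n, ∑ β : Fin n, ∑ ℓ : Fin k,
          (y (oddIdx ℓ) α * y (evenIdx ℓ) β * angJ y α β
            - y (oddIdx ℓ) β * y (evenIdx ℓ) α * angJ y α β) := by
    refine Finset.sum_congr rfl fun α _ => Finset.sum_congr rfl fun β _ => ?_
    nth_rewrite 1 [angJ]
    rw [Finset.sum_mul]
    exact Finset.sum_congr rfl fun ℓ _ => sub_mul _ _ _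
  rw [expand]
  conv_lhs => enter [2, α]; rw [Finset.sum_comm]
  rw [Finset.sum_comm, Finset.mul_sum]
  refine Finset.sum_congr rfl fun ℓ _ => ?_
  simp only [Finset.sum_sub_distrib]
  rw [key_swap y (y (oddIdx ℓ)) (y (evenIdx ℓ)), Qinv_eq]
  ring

/-- The equivalence of: vanishing of the diagonal `Q_{2ℓ-1,2ℓ}`, vanishing of all `Q_{i,j}`,
and vanishing of all angular momentum components `J_{α,β}`. -/
theorem Q_J_tfae (k n : ℕ) (hk : 1 ≤ k) (hn : 1 ≤ n) (y : Fin (2*k) → Fin n → ℝ) :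
    List.TFAE
      [∀ ℓ : Fin k, Qinv y (oddIdx ℓ) (evenIdx ℓ) = 0,
       ∀ i j : Fin (2*k), i < j → Qinv y i j = 0,
       ∀ α β : Fin n, α < β → angJ y α β = 0] := by
  tfae_have 2 → 1 := fun h ℓ => h _ _ (by simp [oddIdx, evenIdx, Fin.lt_def])
  tfae_have 1 → 3 := by
    intro h α β _
    have hsum : ∑ α : Fin n, ∑ β : Fin n, angJ y α β * angJ y α β = 0 := by
      rw [sumJ_sq]
      simp [h]
    have h1 := (Finset.sum_eq_zero_iff_of_nonneg
      (fun α _ => Finset.sum_nonneg fun β _ => mul_self_nonneg _)).mp hsum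
    have h2 := (Finset.sum_eq_zero_iff_of_nonneg
      (fun β _ => mul_self_nonneg _)).mp (h1 α (mem_univ α))
    exact mul_self_eq_zero.mp (h2 β (mem_univ β))
  tfae_have 3 → 2 := by
    intro h i j _
    have hJ : ∀ α β : Fin n, angJ y α β = 0 := by
      intro α β
      rcases lt_trichotomy α β with hlt | heq | hgt
      · exact h α β hlt
      · subst heq; simp [angJ]
      · rw [angJ_anti, h β α hgt, neg_zero]
    rw [Qinv_eq]
    simp [hJ]
  tfae_finish
end

section
/- Let k ≥ 1, n ≥ 1, and y₁,…,y_{2k} ∈ ℝⁿ with Σ_{ℓ=1}^{k} y_{2ℓ-1} ∧ y_{2ℓ} = 0 (i.e., all angular momentum components J_{α,β}(y) vanish). Then the dimension of the linear span of {y₁,…,y_{2k}} in ℝⁿ is at most k. -/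
open Finset

noncomputable def sympForm (k : ℕ) : LinearMap.BilinForm ℝ (Fin (2*k) → ℝ) :=
  LinearMap.mk₂ ℝ
    (fun u v => ∑ ℓ : Fin k, (u (oddIdx ℓ) * v (evenIdx ℓ) - u (evenIdx ℓ) * v (oddIdx ℓ)))
    (by intro a b c
        simp only [Pi.add_apply, ← Finset.sum_add_distrib]
        exact Finset.sum_congr rfl fun _ _ => by ring)
    (by intro a b c
        simp only [Pi.smul_apply, smul_eq_mul, Finset.mul_sum]
        exact Finset.sum_congr rfl fun _ _ => by ring)
    (by intro a b c
        simp only [Pi.add_apply, ← Finset.sum_add_distrib]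
        exact Finset.sum_congr rfl fun _ _ => by ring)
    (by intro a b c
        simp only [Pi.smul_apply, smul_eq_mul, Finset.mul_sum]
        exact Finset.sum_congr rfl fun _ _ => by ring)

lemma sympForm_apply {k : ℕ} (u v : Fin (2*k) → ℝ) :
    sympForm k u v = ∑ ℓ : Fin k, (u (oddIdx ℓ) * v (evenIdx ℓ) - u (evenIdx ℓ) * v (oddIdx ℓ)) :=
  rfl

lemma oddIdx_inj {k : ℕ} {a b : Fin k} : oddIdx a = oddIdx b ↔ a = b := by
  simp [oddIdx, Fin.ext_iff]
lemma evenIdx_inj {k : ℕ} {a b : Fin k} : evenIdx a = evenIdx b ↔ a = b := by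
  simp [evenIdx, Fin.ext_iff]
lemma oddIdx_ne_evenIdx {k : ℕ} (a b : Fin k) : oddIdx a ≠ evenIdx b := by
  simp [oddIdx, evenIdx, Fin.ext_iff]; omega

lemma sympForm_refl {k : ℕ} : (sympForm k).IsRefl := by
  intro u v h
  rw [sympForm_apply] at h ⊢
  have : (∑ ℓ : Fin k, (u (oddIdx ℓ) * v (evenIdx ℓ) - u (evenIdx ℓ) * v (oddIdx ℓ)))
      + (∑ ℓ : Fin k, (v (oddIdx ℓ) * u (evenIdx ℓ) - v (evenIdx ℓ) * u (oddIdx ℓ))) = 0 := by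
    rw [← Finset.sum_add_distrib]; exact Finset.sum_eq_zero fun _ _ => by ring
  linarith

lemma sympForm_nondeg {k : ℕ} : (sympForm k).Nondegenerate := by
  refine (LinearMap.IsRefl.nondegenerate_iff_separatingLeft sympForm_refl).mpr ?_
  intro u hu
  funext i
  have hik : i.val < 2 * k := i.isLt
  rcases Nat.even_or_odd i.val with he | ho
  · set ℓ₀ : Fin k := ⟨i.val / 2, by omega⟩ with hℓ₀
    have hi : i = oddIdx ℓ₀ := by
      obtain ⟨m, hm⟩ := he; rw [Fin.ext_iff]; show i.val = 2 * (i.val / 2); omega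
    have h1 := hu (Pi.single (evenIdx ℓ₀) 1)
    rw [sympForm_apply] at h1
    have h2 : ∀ ℓ : Fin k, u (oddIdx ℓ) * (Pi.single (evenIdx ℓ₀) 1 : Fin (2*k) → ℝ) (evenIdx ℓ)
        - u (evenIdx ℓ) * (Pi.single (evenIdx ℓ₀) 1 : Fin (2*k) → ℝ) (oddIdx ℓ)
        = if ℓ = ℓ₀ then u (oddIdx ℓ) else 0 := by
      intro ℓ
      rw [Pi.single_apply, Pi.single_apply, if_neg (oddIdx_ne_evenIdx ℓ ℓ₀)]
      simp [evenIdx_inj]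
    rw [Finset.sum_congr rfl fun ℓ _ => h2 ℓ, Finset.sum_ite_eq' univ ℓ₀] at h1
    simpa [hi] using h1
  · set ℓ₀ : Fin k := ⟨i.val / 2, by omega⟩ with hℓ₀
    have hi : i = evenIdx ℓ₀ := by
      obtain ⟨m, hm⟩ := ho; rw [Fin.ext_iff]; show i.val = 2 * (i.val / 2) + 1; omega
    have h1 := hu (Pi.single (oddIdx ℓ₀) 1)
    rw [sympForm_apply] at h1
    have h2 : ∀ ℓ : Fin k, u (oddIdx ℓ) * (Pi.single (oddIdx ℓ₀) 1 : Fin (2*k) → ℝ) (evenIdx ℓ)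
        - u (evenIdx ℓ) * (Pi.single (oddIdx ℓ₀) 1 : Fin (2*k) → ℝ) (oddIdx ℓ)
        = if ℓ = ℓ₀ then -u (evenIdx ℓ) else 0 := by
      intro ℓ
      rw [Pi.single_apply, Pi.single_apply,
        if_neg (fun hcon => oddIdx_ne_evenIdx ℓ₀ ℓ hcon.symm)]
      simp only [oddIdx_inj, mul_zero, zero_sub, mul_ite, mul_one]
      split <;> simp
    rw [Finset.sum_congr rfl fun ℓ _ => h2 ℓ, Finset.sum_ite_eq' univ ℓ₀] at h1
    have := hi ▸ h1
    simp at this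
    simpa [hi] using this

/-- If all angular momentum components vanish, the span of `y₁,…,y_{2k}` has dimension at
most `k`. -/
theorem finrank_span_le_of_J_eq_zero (k n : ℕ) (hk : 1 ≤ k) (hn : 1 ≤ n)
    (y : Fin (2*k) → Fin n → ℝ)
    (h : ∀ α β : Fin n, α < β → angJ y α β = 0) :
    Module.finrank ℝ ↥(Submodule.span ℝ (Set.range y)) ≤ k := by
  have hJ : ∀ α β : Fin n, angJ y α β = 0 := by
    intro α β
    rcases lt_trichotomy α β with h' | h' | h'
    · exact h α β h'
    · subst h'; simp [angJ]
    · have h1 := h β α h'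
      have h2 : angJ y α β + angJ y β α = 0 := by
        unfold angJ; rw [← Finset.sum_add_distrib]; exact Finset.sum_eq_zero fun _ _ => by ring
      linarith
  set M : Matrix (Fin (2*k)) (Fin n) ℝ := Matrix.of y with hM
  have hrank : M.rank = Module.finrank ℝ ↥(Submodule.span ℝ (Set.range y)) :=
    M.rank_eq_finrank_span_row
  rw [← hrank, Matrix.rank]
  set W : Submodule ℝ (Fin (2*k) → ℝ) := LinearMap.range M.mulVecLin with hW
  have hiso : ∀ w₁ ∈ W, ∀ w₂ ∈ W, sympForm k w₁ w₂ = 0 := by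
    rintro _ ⟨u, rfl⟩ _ ⟨v, rfl⟩
    rw [sympForm_apply]
    have key : ∀ ℓ : Fin k,
        M.mulVecLin u (oddIdx ℓ) * M.mulVecLin v (evenIdx ℓ)
          - M.mulVecLin u (evenIdx ℓ) * M.mulVecLin v (oddIdx ℓ)
        = ∑ α, ∑ β, u α * v β *
            (y (oddIdx ℓ) α * y (evenIdx ℓ) β - y (oddIdx ℓ) β * y (evenIdx ℓ) α) := by
      intro ℓ
      simp only [Matrix.mulVecLin_apply, Matrix.mulVec, dotProduct, hM, Matrix.of_apply]
      rw [Finset.sum_mul_sum, Finset.sum_mul_sum, ← Finset.sum_sub_distrib]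
      refine Finset.sum_congr rfl fun α _ => ?_
      rw [← Finset.sum_sub_distrib]
      exact Finset.sum_congr rfl fun β _ => by ring
    rw [Finset.sum_congr rfl fun ℓ _ => key ℓ, Finset.sum_comm]
    refine Finset.sum_eq_zero fun α _ => ?_
    rw [Finset.sum_comm]
    refine Finset.sum_eq_zero fun β _ => ?_
    rw [← Finset.mul_sum]
    have := hJ α β
    unfold angJ at this
    rw [this, mul_zero]
  have hle : W ≤ (sympForm k).orthogonal W := fun w hw w' hw' => hiso w' hw' w hw
  have hfin : Module.finrank ℝ W + Module.finrank ℝ ((sympForm k).orthogonal W)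
      = Module.finrank ℝ (Fin (2*k) → ℝ)
        + Module.finrank ℝ (W ⊓ (sympForm k).orthogonal ⊤ : Submodule ℝ (Fin (2*k) → ℝ)) :=
    LinearMap.BilinForm.finrank_add_finrank_orthogonal sympForm_refl W
  rw [LinearMap.BilinForm.orthogonal_top_eq_bot sympForm_nondeg, inf_bot_eq,
    finrank_bot, add_zero, Module.finrank_fin_fun] at hfin
  have hmono : Module.finrank ℝ W ≤ Module.finrank ℝ ((sympForm k).orthogonal W) :=
    Submodule.finrank_mono hle
  omega
end

section
/- Let k be odd, r = (k+1)/2, and let x₁,…,x_{2k} be elements of a module over a ℚ-algebra. Set Q = Σ_{ℓ=1}^{k} x_{2ℓ-1} ∧ x_{2ℓ} and σ = Σ_{t=0}^{r-1} ((-1)^t (r−t−1)! t! / r!) Σ_{A ⊆ {1,…,r}, |A| = r−t−1} Σ_{B ⊆ {r+1,…,k}, |B| = t} ⋀_{ℓ ∈ A ∪ B} (x_{2ℓ-1} ∧ x_{2ℓ}). Then Q ∧ σ = x₁ ∧ x₂ ∧ ⋯ ∧ x_{k+1}. -/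
open Finset

section Aux
variable {A : Type*} [Ring A] (e : ℕ → A)

/-- ordered product over a finset -/
noncomputable def Pw (S : Finset ℕ) : A := ((S.sort (· ≤ ·)).map e).prod

variable (hcomm : ∀ i j, Commute (e i) (e j)) (hsq : ∀ i, e i * e i = 0)

include hcomm in
theorem Pw_insert {ℓ : ℕ} {S : Finset ℕ} (h : ℓ ∉ S) :
    Pw e (insert ℓ S) = e ℓ * Pw e S := by
  have hperm : List.Perm ((insert ℓ S).sort (· ≤ ·)) (ℓ :: S.sort (· ≤ ·)) := by
    rw [← Multiset.coe_eq_coe]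
    rw [Finset.sort_eq, ← Multiset.cons_coe, Finset.sort_eq,
      Finset.insert_val, Multiset.ndinsert_of_notMem h]
  have hperm2 := hperm.map e
  have := hperm2.prod_eq' ?_
  · simpa [Pw] using this
  · rw [List.pairwise_map]
    exact List.pairwise_of_forall hcomm

include hcomm hsq in
theorem e_mul_Pw_of_mem {ℓ : ℕ} {S : Finset ℕ} (h : ℓ ∈ S) :
    e ℓ * Pw e S = 0 := by
  have h1 : S = insert ℓ (S.erase ℓ) := (Finset.insert_erase h).symm
  rw [h1, Pw_insert e hcomm (Finset.notMem_erase ℓ S), ← mul_assoc, hsq, zero_mul]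

include hcomm hsq in
theorem sum_e_mul_Pw (u S : Finset ℕ) :
    ∑ ℓ ∈ u, e ℓ * Pw e S = ∑ ℓ ∈ u \ S, Pw e (insert ℓ S) := by
  rw [← Finset.sum_subset (Finset.sdiff_subset (s := u) (t := S))]
  · exact Finset.sum_congr rfl fun ℓ hℓ =>
      (Pw_insert e hcomm (Finset.mem_sdiff.mp hℓ).2).symm
  · intro ℓ hℓu hℓ
    exact e_mul_Pw_of_mem e hcomm hsq (by simp only [Finset.mem_sdiff] at hℓ; tauto)

end Aux

theorem sum_insert_powersetCard {B : Type*} [AddCommMonoid B] (u : Finset ℕ) (n : ℕ)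
    (f : Finset ℕ → B) :
    ∑ A ∈ u.powersetCard n, ∑ ℓ ∈ u \ A, f (insert ℓ A)
      = (n+1) • ∑ A ∈ u.powersetCard (n+1), f A := by
  have h1 : (n+1) • ∑ A ∈ u.powersetCard (n+1), f A
      = ∑ A ∈ u.powersetCard (n+1), ∑ _ℓ ∈ A, f A := by
    rw [Finset.smul_sum]
    exact Finset.sum_congr rfl fun A hA => by
      rw [Finset.sum_const, (Finset.mem_powersetCard.mp hA).2]
  rw [h1, Finset.sum_sigma', Finset.sum_sigma']
  refine Finset.sum_nbij' (fun p => ⟨insert p.2 p.1, p.2⟩) (fun p => ⟨p.1.erase p.2, p.2⟩)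
    ?_ ?_ ?_ ?_ ?_
  · rintro ⟨A, ℓ⟩ hp
    simp only [Finset.mem_sigma, Finset.mem_powersetCard, Finset.mem_sdiff] at hp ⊢
    obtain ⟨⟨hAu, hAcard⟩, hℓu, hℓA⟩ := hp
    refine ⟨⟨Finset.insert_subset hℓu hAu, ?_⟩, Finset.mem_insert_self _ _⟩
    rw [Finset.card_insert_of_notMem hℓA, hAcard]
  · rintro ⟨A, ℓ⟩ hp
    simp only [Finset.mem_sigma, Finset.mem_powersetCard, Finset.mem_sdiff] at hp ⊢
    obtain ⟨⟨hAu, hAcard⟩, hℓA⟩ := hp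
    refine ⟨⟨(Finset.erase_subset _ _).trans hAu, ?_⟩, hAu hℓA, Finset.notMem_erase _ _⟩
    rw [Finset.card_erase_of_mem hℓA, hAcard]; rfl
  · rintro ⟨A, ℓ⟩ hp
    simp only [Finset.mem_sigma, Finset.mem_powersetCard, Finset.mem_sdiff] at hp
    simp [Finset.erase_insert_of_ne, Finset.erase_insert hp.2.2]
  · rintro ⟨A, ℓ⟩ hp
    simp only [Finset.mem_sigma, Finset.mem_powersetCard, Finset.mem_sdiff] at hp
    simp [Finset.insert_erase hp.2]
  · rintro ⟨A, ℓ⟩ _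
    rfl

theorem sort_Icc_eq (a b : ℕ) :
    (Finset.Icc a b).sort (· ≤ ·) = List.range' a (b + 1 - a) := by
  refine (fun hp hs => List.Perm.eq_of_pairwise' (Finset.pairwise_sort _ _) hs hp) ?_ ?_
  · refine Multiset.coe_eq_coe.mp ?_
    rw [Finset.sort_eq, Nat.Icc_eq_range']
  · exact List.pairwise_le_range' 1

theorem prod_range'_pairs {A : Type*} [Monoid A] (g : ℕ → A) (r : ℕ) :
    ((List.range' 1 r).map (fun ℓ => g (2*ℓ-1) * g (2*ℓ))).prod
      = ((List.range' 1 (2*r)).map g).prod := by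
  induction r with
  | zero => rfl
  | succ n ih =>
    have h2 : 2*(n+1) = (2*n+1)+1 := by omega
    rw [List.range'_1_concat, h2, List.range'_1_concat, List.range'_1_concat]
    simp only [List.map_append, List.prod_append, ih, List.map_cons, List.map_nil,
      List.prod_cons, List.prod_nil]
    have e1 : 2*(1+n)-1 = 1+(2*n) := by omega
    have e2 : 2*(1+n) = 1+(2*n+1) := by omega
    rw [e1, e2]; simp [mul_assoc]

theorem ofFn_shift_eq {A : Type*} (g : ℕ → A) (n : ℕ) :
    (List.ofFn fun t : Fin n => g (t.val+1)) = (List.range' 1 n).map g := by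
  rw [List.ofFn_eq_map, List.range'_eq_map_range, List.map_map]
  have : (List.finRange n).map (fun t : Fin n => g (t.val+1))
      = ((List.finRange n).map Fin.val).map (fun i => g (i+1)) := by
    rw [List.map_map]; rfl
  rw [this, List.map_coe_finRange_eq_range]
  congr 1
  funext i
  simp [Nat.add_comm]

theorem comm4 {A : Type*} [Ring A] {a b c d : A} (hac : a*c + c*a = 0) (had : a*d + d*a = 0)
    (hbc : b*c + c*b = 0) (hbd : b*d + d*b = 0) : (a*b)*(c*d) = (c*d)*(a*b) := by
  have hac' : a*c = -(c*a) := eq_neg_of_add_eq_zero_left hac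
  have had' : a*d = -(d*a) := eq_neg_of_add_eq_zero_left had
  have hbc' : b*c = -(c*b) := eq_neg_of_add_eq_zero_left hbc
  have hbd' : b*d = -(d*b) := eq_neg_of_add_eq_zero_left hbd
  calc (a*b)*(c*d) = a*(b*c)*d := by noncomm_ring
    _ = a*(-(c*b))*d := by rw [hbc']
    _ = -((a*c)*(b*d)) := by noncomm_ring
    _ = -((-(c*a))*(b*d)) := by rw [← hac']
    _ = c*a*(b*d) := by noncomm_ring
    _ = c*a*(-(d*b)) := by rw [hbd']
    _ = -(c*(a*d)*b) := by noncomm_ring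
    _ = -(c*(-(d*a))*b) := by rw [← had']
    _ = (c*d)*(a*b) := by noncomm_ring

section Key
variable {R : Type*} [CommRing R] [Algebra ℚ R] {A : Type*} [Ring A] [Algebra R A]

theorem coeff_cancel (m t : ℕ) (ht : t < m) :
    ((-1:ℚ)^(t+1) * (Nat.factorial (m+1-(t+1)-1)) * (Nat.factorial (t+1)) / (Nat.factorial (m+1)))
        * ((m+1-(t+1) : ℕ) : ℚ)
      + ((-1:ℚ)^t * (Nat.factorial (m+1-t-1)) * (Nat.factorial t) / (Nat.factorial (m+1)))
        * ((t+1 : ℕ) : ℚ) = 0 := by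
  obtain ⟨j, rfl⟩ : ∃ j, m = t + 1 + j := ⟨m - t - 1, by omega⟩
  rw [show t+1+j+1-(t+1)-1 = j from by omega, show t+1+j+1-(t+1) = j+1 from by omega,
    show t+1+j+1-t-1 = j+1 from by omega]
  have hfac : (Nat.factorial (t+1+j+1) : ℚ) ≠ 0 := by positivity
  push_cast [Nat.factorial_succ, pow_succ]
  field_simp
  ring

theorem key (e : ℕ → A) (hcomm : ∀ i j, Commute (e i) (e j)) (hsq : ∀ i, e i * e i = 0)
    (m : ℕ) :
    (∑ ℓ ∈ Finset.Icc 1 (2*m+1), e ℓ) *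
      (∑ t ∈ Finset.range (m+1),
        algebraMap ℚ R
          ((-1)^t * (Nat.factorial (m+1-t-1)) * (Nat.factorial t) / (Nat.factorial (m+1))) •
        ∑ S1 ∈ (Finset.Icc 1 (m+1)).powersetCard (m+1-t-1),
          ∑ S2 ∈ (Finset.Icc (m+2) (2*m+1)).powersetCard t, Pw e (S1 ∪ S2))
      = Pw e (Finset.Icc 1 (m+1)) := by
  set c : ℕ → ℚ := fun t =>
    (-1)^t * (Nat.factorial (m+1-t-1)) * (Nat.factorial t) / (Nat.factorial (m+1)) with hc
  set Q : A := ∑ ℓ ∈ Finset.Icc 1 (2*m+1), e ℓ with hQ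
  set D : ℕ → A := fun t => ∑ S1 ∈ (Finset.Icc 1 (m+1)).powersetCard (m+1-t),
      ∑ S2 ∈ (Finset.Icc (m+2) (2*m+1)).powersetCard t, Pw e (S1 ∪ S2) with hD
  have hsplit : ∀ t ∈ range (m+1), ∀ S1 ∈ (Icc 1 (m+1)).powersetCard (m+1-t-1),
      ∀ S2 ∈ (Icc (m+2) (2*m+1)).powersetCard t,
      Q * Pw e (S1 ∪ S2)
        = (∑ ℓ ∈ Icc 1 (m+1) \ S1, Pw e (insert ℓ S1 ∪ S2))
          + ∑ ℓ ∈ Icc (m+2) (2*m+1) \ S2, Pw e (S1 ∪ insert ℓ S2) := by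
    intro t ht S1 hS1 S2 hS2
    rw [hQ, Finset.sum_mul,
      Finset.sum_congr rfl (fun ℓ _ => rfl), sum_e_mul_Pw e hcomm hsq]
    obtain ⟨hA1, -⟩ := mem_powersetCard.mp hS1
    obtain ⟨hB1, -⟩ := mem_powersetCard.mp hS2
    have h1 : ∀ ℓ, ℓ ∈ S1 → 1 ≤ ℓ ∧ ℓ ≤ m+1 := fun ℓ h => mem_Icc.mp (hA1 h)
    have h2 : ∀ ℓ, ℓ ∈ S2 → m+2 ≤ ℓ ∧ ℓ ≤ 2*m+1 := fun ℓ h => mem_Icc.mp (hB1 h)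
    have hset : Icc 1 (2*m+1) \ (S1 ∪ S2)
        = (Icc 1 (m+1) \ S1) ∪ (Icc (m+2) (2*m+1) \ S2) := by
      ext ℓ
      simp only [mem_sdiff, mem_union, mem_Icc, not_or]
      constructor
      · rintro ⟨⟨g1, g2⟩, g3, g4⟩
        by_cases hle : ℓ ≤ m + 1
        · exact Or.inl ⟨⟨g1, hle⟩, g3⟩
        · exact Or.inr ⟨⟨by omega, g2⟩, g4⟩
      · rintro (⟨⟨g1, g2⟩, g4⟩ | ⟨⟨g1, g2⟩, g4⟩)
        · exact ⟨⟨g1, by omega⟩, g4, fun h => by have := h2 ℓ h; omega⟩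
        · exact ⟨⟨by omega, g2⟩, fun h => by have := h1 ℓ h; omega, g4⟩
    have hdisj : Disjoint (Icc 1 (m+1) \ S1) (Icc (m+2) (2*m+1) \ S2) := by
      rw [Finset.disjoint_left]
      intro a ha hb
      rw [mem_sdiff, mem_Icc] at ha hb
      omega
    rw [hset, Finset.sum_union hdisj]
    congr 1
    · exact sum_congr rfl fun ℓ _ => by rw [Finset.insert_union]
    · exact sum_congr rfl fun ℓ _ => by rw [Finset.union_insert]
  calc Q * (∑ t ∈ range (m+1), algebraMap ℚ R (c t) •
        ∑ S1 ∈ (Icc 1 (m+1)).powersetCard (m+1-t-1),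
          ∑ S2 ∈ (Icc (m+2) (2*m+1)).powersetCard t, Pw e (S1 ∪ S2))
      = ∑ t ∈ range (m+1), algebraMap ℚ R (c t) •
          ∑ S1 ∈ (Icc 1 (m+1)).powersetCard (m+1-t-1),
            ∑ S2 ∈ (Icc (m+2) (2*m+1)).powersetCard t, Q * Pw e (S1 ∪ S2) := by
        rw [Finset.mul_sum]
        refine sum_congr rfl fun t ht => ?_
        rw [mul_smul_comm, Finset.mul_sum]
        congr 1
        exact sum_congr rfl fun S1 _ => by rw [Finset.mul_sum]
    _ = ∑ t ∈ range (m+1), algebraMap ℚ R (c t) •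
          ((m+1-t) • D t + (t+1) • D (t+1)) := by
        refine sum_congr rfl fun t ht => ?_
        congr 1
        rw [sum_congr rfl fun S1 hS1 => sum_congr rfl fun S2 hS2 =>
          hsplit t ht S1 hS1 S2 hS2]
        simp only [Finset.sum_add_distrib]
        congr 1
        · rw [Finset.sum_comm]
          rw [sum_congr rfl fun S2 _ => sum_insert_powersetCard (Icc 1 (m+1)) (m+1-t-1)
            (fun S1' => Pw e (S1' ∪ S2))]
          rw [show m+1-t-1+1 = m+1-t from by have := mem_range.mp ht; omega]
          rw [← Finset.smul_sum, Finset.sum_comm]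
        · rw [sum_congr rfl fun S1 _ => sum_insert_powersetCard (Icc (m+2) (2*m+1)) t
            (fun S2' => Pw e (S1 ∪ S2'))]
          rw [← Finset.smul_sum]
          congr 1
    _ = (∑ t ∈ range (m+1), algebraMap ℚ R (c t * ((m+1-t : ℕ) : ℚ)) • D t)
        + ∑ t ∈ range (m+1), algebraMap ℚ R (c t * ((t+1 : ℕ) : ℚ)) • D (t+1) := by
        rw [← Finset.sum_add_distrib]
        refine sum_congr rfl fun t ht => ?_
        rw [smul_add]
        congr 1
        · rw [← Nat.cast_smul_eq_nsmul R (m+1-t) (D t), smul_smul,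
            ← map_natCast (algebraMap ℚ R) (m+1-t), ← map_mul]
        · rw [← Nat.cast_smul_eq_nsmul R (t+1) (D (t+1)), smul_smul,
            ← map_natCast (algebraMap ℚ R) (t+1), ← map_mul]
    _ = D 0 := by
        rw [Finset.sum_range_succ' _ m, Finset.sum_range_succ _ m]
        have hDm : D (m+1) = 0 := by
          rw [hD]
          simp only
          rw [show (Icc (m+2) (2*m+1)).powersetCard (m+1) = ∅ from
            Finset.powersetCard_eq_empty.mpr (by rw [Nat.card_Icc]; omega)]
          simp
        have hzero : ∀ t ∈ range m,
            algebraMap ℚ R (c (t+1) * ((m+1-(t+1) : ℕ) : ℚ)) • D (t+1)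
              + algebraMap ℚ R (c t * ((t+1 : ℕ) : ℚ)) • D (t+1) = 0 := by
          intro t ht
          rw [← add_smul, ← map_add, hc]
          simp only
          rw [coeff_cancel m t (mem_range.mp ht), map_zero, zero_smul]
        have hone : algebraMap ℚ R (c 0 * ((m+1-0 : ℕ) : ℚ)) = 1 := by
          have hval : c 0 * ((m+1-0 : ℕ) : ℚ) = 1 := by
            rw [hc]
            simp only [pow_zero, one_mul, Nat.sub_zero, Nat.factorial_zero, Nat.cast_one,
              mul_one]
            rw [Nat.factorial_succ]
            have : (Nat.factorial m : ℚ) ≠ 0 := by positivity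
            push_cast
            field_simp
          rw [hval, map_one]
        rw [hDm, smul_zero, add_zero, hone, one_smul, add_right_comm,
          ← Finset.sum_add_distrib, Finset.sum_eq_zero hzero, zero_add]
    _ = Pw e (Icc 1 (m+1)) := by
        rw [hD]
        simp only
        have h1 : (Icc 1 (m+1)).powersetCard (m+1-0) = {Icc 1 (m+1)} := by
          have hcard : (Icc 1 (m+1)).card = m + 1 := by rw [Nat.card_Icc]; omega
          have h2 := Finset.powersetCard_self (Icc 1 (m+1))
          rw [hcard] at h2
          rw [Nat.sub_zero, h2]
        rw [h1, Finset.powersetCard_zero, Finset.sum_singleton, Finset.sum_singleton,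
          Finset.union_empty]

end Key

/-- For odd `k` and `r = (k+1)/2`, the explicit `(k-1)`-form `σ` satisfies
`Q ∧ σ = x₁ ∧ ⋯ ∧ x_{k+1}`, where `Q = Σ_{ℓ=1}^k x_{2ℓ-1} ∧ x_{2ℓ}`.
Vectors are indexed `x 1, …, x (2k)` and wedges over an index set are taken
in increasing order (the factors `x_{2ℓ-1} ∧ x_{2ℓ}` have even degree, so the
order is immaterial). -/
theorem Q_wedge_sigma (R : Type*) [CommRing R] [Algebra ℚ R]
    (M : Type*) [AddCommGroup M] [Module R M]
    (k : ℕ) (hk : Odd k) (x : ℕ → M) :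
    letI ι := ExteriorAlgebra.ι R (M := M)
    letI r := (k+1)/2
    letI Q : ExteriorAlgebra R M := ∑ ℓ ∈ Finset.Icc 1 k, ι (x (2*ℓ-1)) * ι (x (2*ℓ))
    letI σ : ExteriorAlgebra R M :=
      ∑ t ∈ Finset.range r,
        algebraMap ℚ R
          ((-1)^t * (Nat.factorial (r-t-1)) * (Nat.factorial t) / (Nat.factorial r)) •
        ∑ A ∈ (Finset.Icc 1 r).powersetCard (r-t-1),
          ∑ B ∈ (Finset.Icc (r+1) k).powersetCard t,
            (((A ∪ B).sort (· ≤ ·)).map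
              (fun ℓ => ι (x (2*ℓ-1)) * ι (x (2*ℓ)))).prod
    Q * σ = (List.ofFn fun t : Fin (k+1) => ι (x (t.val+1))).prod := by
  obtain ⟨m, hm⟩ := hk
  have hk2 : k = 2*m+1 := by omega
  subst hk2
  rw [show (2*m+1+1)/2 = m+1 from by omega]
  set e : ℕ → ExteriorAlgebra R M :=
    fun ℓ => ExteriorAlgebra.ι R (x (2*ℓ-1)) * ExteriorAlgebra.ι R (x (2*ℓ)) with he
  have hswap : ∀ a b : M, ExteriorAlgebra.ι R b * ExteriorAlgebra.ι R a
      = -(ExteriorAlgebra.ι R a * ExteriorAlgebra.ι R b) := fun a b =>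
    eq_neg_of_add_eq_zero_left (by rw [add_comm]; exact ExteriorAlgebra.ι_add_mul_swap a b)
  have hsq : ∀ i, e i * e i = 0 := by
    intro i
    rw [he]
    simp only
    calc ExteriorAlgebra.ι R (x (2*i-1)) * ExteriorAlgebra.ι R (x (2*i)) *
          (ExteriorAlgebra.ι R (x (2*i-1)) * ExteriorAlgebra.ι R (x (2*i)))
        = ExteriorAlgebra.ι R (x (2*i-1)) *
            (ExteriorAlgebra.ι R (x (2*i)) * ExteriorAlgebra.ι R (x (2*i-1))) *
            ExteriorAlgebra.ι R (x (2*i)) := by noncomm_ring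
      _ = ExteriorAlgebra.ι R (x (2*i-1)) *
            (-(ExteriorAlgebra.ι R (x (2*i-1)) * ExteriorAlgebra.ι R (x (2*i)))) *
            ExteriorAlgebra.ι R (x (2*i)) := by rw [hswap]
      _ = -((ExteriorAlgebra.ι R (x (2*i-1)) * ExteriorAlgebra.ι R (x (2*i-1))) *
            (ExteriorAlgebra.ι R (x (2*i)) * ExteriorAlgebra.ι R (x (2*i)))) := by noncomm_ring
      _ = 0 := by rw [ExteriorAlgebra.ι_sq_zero, zero_mul, neg_zero]
  have hcomm : ∀ i j, Commute (e i) (e j) := by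
    intro i j
    rw [he]
    exact comm4 (ExteriorAlgebra.ι_add_mul_swap _ _) (ExteriorAlgebra.ι_add_mul_swap _ _)
      (ExteriorAlgebra.ι_add_mul_swap _ _) (ExteriorAlgebra.ι_add_mul_swap _ _)
  have hkey := key (R := R) (A := ExteriorAlgebra R M) e hcomm hsq m
  refine hkey.trans ?_
  have e1 : Pw e (Icc 1 (m+1)) = ((List.range' 1 (m+1)).map e).prod := by
    rw [Pw, sort_Icc_eq, show m+1+1-1 = m+1 from rfl]
  have e2 := prod_range'_pairs (fun i => ExteriorAlgebra.ι R (x i)) (m+1)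
  have e3 := ofFn_shift_eq (fun i => ExteriorAlgebra.ι R (x i)) (2*(m+1))
  rw [e1]
  refine Eq.trans e2 ?_
  rw [← e3]
  rfl
end

section
/- Let k ≥ 1 and n ≥ k+1. If y = (y₁,…,y_{2k}) ∈ (ℝⁿ)^{2k} satisfies Σ_{ℓ=1}^{k} y_{2ℓ-1} ∧ y_{2ℓ} = 0, then the Oₙ-orbit and the SOₙ-orbit of y coincide. Consequently, the symplectic quotients Z/Oₙ and Z/SOₙ coincide, where Z is the zero set of the angular momentum map. -/
set_option synthInstance.maxHeartbeats 400000
set_option maxHeartbeats 800000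

open Finset


open Matrix LinearMap Submodule Module


open Finset Matrix LinearMap Submodule Module

/-- Key rank bound: if `U Vᵀ = V Uᵀ` then the span of the columns of `U` and `V`
together has dimension at most `k`. -/
lemma rank_bound {k n : ℕ} (U V : Matrix (Fin n) (Fin k) ℝ) (h : U * Vᵀ = V * Uᵀ) :
    finrank ℝ ((LinearMap.range U.mulVecLin ⊔ LinearMap.range V.mulVecLin :
      Submodule ℝ (Fin n → ℝ))) ≤ k := by
  set CU := LinearMap.range U.mulVecLin with hCU
  set CV := LinearMap.range V.mulVecLin with hCV
  set W : Submodule ℝ (Fin k → ℝ) := CU.comap V.mulVecLin with hW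
  have hkerW : LinearMap.ker V.mulVecLin ≤ W := by
    intro c hc
    simp only [LinearMap.mem_ker] at hc
    simp [hW, Submodule.mem_comap, hc]
  -- e1
  have e1 := Submodule.finrank_sup_add_finrank_inf_eq CU CV
  -- e2
  have e2 : finrank ℝ CV + finrank ℝ (LinearMap.ker V.mulVecLin) = k := by
    have := LinearMap.finrank_range_add_finrank_ker V.mulVecLin
    simpa [Module.finrank_fintype_fun_eq_card] using this
  -- e3
  have e3 : finrank ℝ (CU ⊓ CV : Submodule ℝ (Fin n → ℝ))
      + finrank ℝ (LinearMap.ker V.mulVecLin) = finrank ℝ W := by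
    have rn := LinearMap.finrank_range_add_finrank_ker (V.mulVecLin.domRestrict W)
    rw [LinearMap.range_domRestrict, LinearMap.ker_domRestrict] at rn
    have hmap : W.map V.mulVecLin = CU ⊓ CV := by
      rw [hW, Submodule.map_comap_eq, inf_comm]
    have hker : finrank ℝ ((LinearMap.ker V.mulVecLin).comap W.subtype)
        = finrank ℝ (LinearMap.ker V.mulVecLin) :=
      (Submodule.comapSubtypeEquivOfLe hkerW).finrank_eq
    rw [hmap, hker] at rn
    simpa using rn
  -- e4
  have e4 : finrank ℝ CU ≤ finrank ℝ W := by
    have hle : LinearMap.range Uᵀ.mulVecLin ≤ W := by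
      rintro x ⟨c, rfl⟩
      simp only [hW, Submodule.mem_comap, Matrix.mulVecLin_apply, Matrix.mulVec_mulVec, ← h]
      exact ⟨Vᵀ.mulVec c, by simp [Matrix.mulVec_mulVec]⟩
    have h1 : finrank ℝ (LinearMap.range Uᵀ.mulVecLin) = finrank ℝ CU := by
      have := Matrix.rank_transpose U
      simpa [Matrix.rank, hCU] using this
    calc finrank ℝ CU = finrank ℝ (LinearMap.range Uᵀ.mulVecLin) := h1.symm
      _ ≤ finrank ℝ W := Submodule.finrank_mono hle
  omega


/-- The reflection in the hyperplane orthogonal to `w`. -/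
lemma reflection_props {n : ℕ} (w : Fin n → ℝ) (hw : w ≠ 0) :
    ∃ R : Matrix (Fin n) (Fin n) ℝ, Rᵀ = R ∧ R * R = 1 ∧ R.det = -1 ∧
      ∀ z : Fin n → ℝ, w ⬝ᵥ z = 0 → R *ᵥ z = z := by
  set q : ℝ := w ⬝ᵥ w with hqdef
  have hq : 0 < q := by
    obtain ⟨α, hα⟩ : ∃ α, w α ≠ 0 := by
      by_contra hcon
      push_neg at hcon
      exact hw (funext hcon)
    refine Finset.sum_pos' (fun i _ => mul_self_nonneg _) ⟨α, Finset.mem_univ _, ?_⟩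
    exact mul_self_pos.2 hα
  have hq0 : q ≠ 0 := ne_of_gt hq
  set c : ℝ := -2 / q with hcdef
  set P : Matrix (Fin n) (Fin n) ℝ := Matrix.replicateCol (Fin 1) w * Matrix.replicateRow (Fin 1) w with hPdef
  have hPapp : ∀ α β, P α β = w α * w β := by
    intro α β
    simp [hPdef, Matrix.mul_apply, Fin.sum_univ_one]
  have hPP : P * P = q • P := by
    ext α β
    simp only [Matrix.mul_apply, hPapp, Matrix.smul_apply, smul_eq_mul, hqdef, dotProduct]
    rw [Finset.sum_mul]
    exact Finset.sum_congr rfl fun γ _ => by ring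
  refine ⟨1 + c • P, ?_, ?_, ?_, ?_⟩
  · simp [Matrix.transpose_add, Matrix.transpose_smul, hPdef, Matrix.transpose_mul,
      Matrix.transpose_replicateCol, Matrix.transpose_replicateRow]
  · have hc : c + (c + c * (c * q)) = 0 := by
      field_simp [hcdef]
      have hcq : c * q = -2 := by rw [hcdef]; exact div_mul_cancel₀ _ hq0
      linear_combination c * hcq
    simp only [mul_add, add_mul, one_mul, mul_one, Matrix.smul_mul, Matrix.mul_smul, hPP,
      smul_smul]
    rw [← add_smul, add_assoc, ← add_smul, hc, zero_smul, add_zero]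
  · have : (1 : Matrix (Fin n) (Fin n) ℝ) + c • P
        = 1 + Matrix.replicateCol (Fin 1) (c • w) * Matrix.replicateRow (Fin 1) w := by
      rw [Matrix.replicateCol_smul, Matrix.smul_mul]
    rw [this]; refine (Matrix.det_one_add_replicateCol_mul_replicateRow (ι := Fin 1) (c • w) w).trans ?_
    rw [dotProduct_smul, smul_eq_mul, ← hqdef, hcdef]
    field_simp
    ring
  · intro z hz
    have hPz : P *ᵥ z = 0 := by
      ext α
      simp only [Matrix.mulVec, dotProduct, hPapp, Pi.zero_apply]
      have h1 : ∑ β, w α * w β * z β = w α * ∑ β, w β * z β := by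
        rw [Finset.mul_sum]; exact Finset.sum_congr rfl fun β _ => by ring
      have h2 : ∑ β, w β * z β = 0 := hz
      rw [h1, h2, mul_zero]
    rw [Matrix.add_mulVec, Matrix.one_mulVec, Matrix.smul_mulVec, hPz, smul_zero, add_zero]


/-- For `n ≥ k+1`, at any point of the zero angular momentum set, the `Oₙ`-orbit coincides
with the `SOₙ`-orbit. -/
theorem orbit_O_eq_orbit_SO (k n : ℕ) (hk : 1 ≤ k) (hn : k + 1 ≤ n)
    (y : Fin (2*k) → Fin n → ℝ)
    (hJ : ∀ α β : Fin n, α < β → angJ y α β = 0) :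
    {z : Fin (2*k) → Fin n → ℝ | ∃ g : Matrix.orthogonalGroup (Fin n) ℝ,
        ∀ i, z i = Matrix.mulVec (g : Matrix (Fin n) (Fin n) ℝ) (y i)}
    = {z : Fin (2*k) → Fin n → ℝ | ∃ g : Matrix.specialOrthogonalGroup (Fin n) ℝ,
        ∀ i, z i = Matrix.mulVec (g : Matrix (Fin n) (Fin n) ℝ) (y i)} := by
  have hJ' : ∀ α β : Fin n, angJ y α β = 0 := by
    intro α β
    rcases lt_trichotomy α β with h | h | h
    · exact hJ α β h
    · subst h; unfold angJ; exact Finset.sum_eq_zero fun ℓ _ => by ring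
    · have h2 : angJ y α β + angJ y β α = 0 := by
        unfold angJ
        rw [← Finset.sum_add_distrib]
        exact Finset.sum_eq_zero fun ℓ _ => by ring
      have h3 := hJ β α h
      linarith
  set U : Matrix (Fin n) (Fin k) ℝ := Matrix.of fun α ℓ => y (oddIdx ℓ) α with hU
  set V : Matrix (Fin n) (Fin k) ℝ := Matrix.of fun α ℓ => y (evenIdx ℓ) α with hV
  have hUV : U * Vᵀ = V * Uᵀ := by
    ext α β
    have h0 := hJ' α β
    unfold angJ at h0
    rw [Finset.sum_sub_distrib, sub_eq_zero] at h0
    simp only [Matrix.mul_apply, Matrix.transpose_apply, hU, hV, Matrix.of_apply]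
    rw [h0]
    exact Finset.sum_congr rfl fun ℓ _ => mul_comm _ _
  set CU := LinearMap.range U.mulVecLin with hCUdef
  set CV := LinearMap.range V.mulVecLin with hCVdef
  have hyU : ∀ ℓ, y (oddIdx ℓ) ∈ CU :=
    fun ℓ => ⟨Pi.single ℓ 1, by
      rw [Matrix.mulVecLin_apply, Matrix.mulVec_single_one]; rfl⟩
  have hyV : ∀ ℓ, y (evenIdx ℓ) ∈ CV :=
    fun ℓ => ⟨Pi.single ℓ 1, by
      rw [Matrix.mulVecLin_apply, Matrix.mulVec_single_one]; rfl⟩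
  have hyi : ∀ i : Fin (2*k), y i ∈ CU ⊔ CV := by
    intro i
    have hlt := i.isLt
    rcases Nat.even_or_odd i.val with ⟨m, hm⟩ | ⟨m, hm⟩
    · have hmk : m < k := by omega
      have : i = oddIdx ⟨m, hmk⟩ := Fin.ext (by simp [oddIdx]; omega)
      rw [this]; exact Submodule.mem_sup_left (hyU _)
    · have hmk : m < k := by omega
      have : i = evenIdx ⟨m, hmk⟩ := Fin.ext (by simp [evenIdx]; omega)
      rw [this]; exact Submodule.mem_sup_right (hyV _)
  set Y : Matrix (Fin (2*k)) (Fin n) ℝ := Matrix.of y with hY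
  have hspan : LinearMap.range Yᵀ.mulVecLin ≤ CU ⊔ CV := by
    rw [Matrix.range_mulVecLin]
    apply Submodule.span_le.2
    rintro x ⟨i, rfl⟩
    exact hyi i
  have hrankY : Y.rank ≤ k := by
    rw [← Matrix.rank_transpose]
    calc Yᵀ.rank = finrank ℝ (LinearMap.range Yᵀ.mulVecLin) := rfl
      _ ≤ finrank ℝ (CU ⊔ CV : Submodule ℝ (Fin n → ℝ)) := Submodule.finrank_mono hspan
      _ ≤ k := rank_bound U V hUV
  have hker : LinearMap.ker Y.mulVecLin ≠ ⊥ := by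
    intro hbot
    have hrn := LinearMap.finrank_range_add_finrank_ker Y.mulVecLin
    rw [hbot] at hrn
    rw [finrank_bot, add_zero, Module.finrank_fintype_fun_eq_card, Fintype.card_fin] at hrn
    have : Y.rank = n := hrn
    omega
  obtain ⟨w, hwker, hw0⟩ := (Submodule.ne_bot_iff _).mp hker
  have hwy : ∀ i, w ⬝ᵥ y i = 0 := by
    intro i
    have hz : Y.mulVec w = 0 := LinearMap.mem_ker.mp hwker
    have hi := congrFun hz i
    rw [dotProduct_comm]
    exact hi
  obtain ⟨R, hRt, hRR, hRdet, hRfix⟩ := reflection_props w hw0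
  have hRy : ∀ i, R *ᵥ y i = y i := fun i => hRfix _ (hwy i)
  have hstarR : star R = R := by
    rw [Matrix.star_eq_conjTranspose]
    rw [show Rᴴ = Rᵀ by ext a b; simp [Matrix.conjTranspose_apply]]
    exact hRt
  have hRO : R ∈ Matrix.orthogonalGroup (Fin n) ℝ := by
    rw [Matrix.mem_orthogonalGroup_iff, hRt]
    exact hRR
  ext z
  simp only [Set.mem_setOf_eq]
  constructor
  · rintro ⟨g, hg⟩
    have hdet : (g : Matrix (Fin n) (Fin n) ℝ).det = 1 ∨
        (g : Matrix (Fin n) (Fin n) ℝ).det = -1 := by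
      have h1 : (g : Matrix (Fin n) (Fin n) ℝ) * star (g : Matrix (Fin n) (Fin n) ℝ) = 1 :=
        (Matrix.mem_orthogonalGroup_iff (Fin n) ℝ).mp g.2
      have h2 := congrArg Matrix.det h1
      rw [Matrix.det_mul, Matrix.det_one] at h2
      have h3 : (star (g : Matrix (Fin n) (Fin n) ℝ)).det
          = (g : Matrix (Fin n) (Fin n) ℝ).det := by
        rw [Matrix.star_eq_conjTranspose,
          show (g : Matrix (Fin n) (Fin n) ℝ)ᴴ = (g : Matrix (Fin n) (Fin n) ℝ)ᵀ by
            ext a b; simp [Matrix.conjTranspose_apply],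
          Matrix.det_transpose]
      rw [h3] at h2
      exact mul_self_eq_one_iff.mp h2
    rcases hdet with h1 | h1
    · exact ⟨⟨g, (Matrix.mem_specialOrthogonalGroup_iff).mpr ⟨g.2, h1⟩⟩, hg⟩
    · refine ⟨⟨(g : Matrix (Fin n) (Fin n) ℝ) * R,
        (Matrix.mem_specialOrthogonalGroup_iff).mpr ⟨mul_mem g.2 hRO, ?_⟩⟩, ?_⟩
      · rw [Matrix.det_mul, h1, hRdet]; norm_num
      · intro i
        show z i = ((g : Matrix (Fin n) (Fin n) ℝ) * R) *ᵥ y i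
        rw [← Matrix.mulVec_mulVec, hRy i]
        exact hg i
  · rintro ⟨g, hg⟩
    exact ⟨⟨g, ((Matrix.mem_specialOrthogonalGroup_iff).mp g.2).1⟩, hg⟩
end

section
/- Let n ≤ k. Define y ∈ (ℝⁿ)^{2k} by y_{2ℓ-1} = y_{2ℓ} = e_ℓ (the ℓ-th standard basis vector of ℝⁿ) for ℓ ≤ n and y_{2ℓ-1} = y_{2ℓ} = 0 for ℓ > n. Then y lies in the zero set of the angular momentum map (Σ_{ℓ} y_{2ℓ-1} ∧ y_{2ℓ} = 0) and y has trivial Oₙ-isotropy group; in particular its Oₙ-orbit and SOₙ-orbit do not coincide when n ≥ 1. -/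
open Finset

/-- Multiplying a matrix by a standard basis vector picks out a column. -/
lemma mulVec_std {n : ℕ} (M : Matrix (Fin n) (Fin n) ℝ) (a : ℕ) (ha : a < n) :
    M.mulVec (fun β : Fin n => if a = β.val then (1:ℝ) else 0) = fun β => M β ⟨a, ha⟩ := by
  funext β
  simp only [Matrix.mulVec, dotProduct, mul_ite, mul_one, mul_zero]
  rw [show (fun j : Fin n => if a = j.val then M β j else 0)
      = fun j : Fin n => if j = ⟨a, ha⟩ then M β j else 0 by
    funext j; congr 1; simp [Fin.ext_iff, eq_comm]]
  simp

/-- For `n ≤ k`, the point with `q_ℓ = p_ℓ = e_ℓ` for `ℓ ≤ n` and `q_ℓ = p_ℓ = 0` for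
`ℓ > n` lies on the shell, has trivial `Oₙ`-isotropy, and its `Oₙ`- and `SOₙ`-orbits do not
coincide. (Here `y i α = 1` iff the particle number `i/2` equals `α`.) -/
theorem shell_point_trivial_isotropy (k n : ℕ) (hn : 1 ≤ n) (hnk : n ≤ k) :
    letI y : Fin (2*k) → Fin n → ℝ := fun i α => if i.val / 2 = α.val then 1 else 0
    (∀ α β : Fin n, α < β → angJ y α β = 0) ∧
    (∀ g : Matrix.orthogonalGroup (Fin n) ℝ,
        (∀ i, Matrix.mulVec (g : Matrix (Fin n) (Fin n) ℝ) (y i) = y i) → g = 1) ∧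
    {z : Fin (2*k) → Fin n → ℝ | ∃ g : Matrix.orthogonalGroup (Fin n) ℝ,
        ∀ i, z i = Matrix.mulVec (g : Matrix (Fin n) (Fin n) ℝ) (y i)}
      ≠ {z : Fin (2*k) → Fin n → ℝ | ∃ g : Matrix.specialOrthogonalGroup (Fin n) ℝ,
        ∀ i, z i = Matrix.mulVec (g : Matrix (Fin n) (Fin n) ℝ) (y i)} := by
  set y : Fin (2*k) → Fin n → ℝ := fun i α => if i.val / 2 = α.val then 1 else 0 with hy
  -- basic facts about y
  have hy_eq : ∀ ℓ : Fin k, y (evenIdx ℓ) = y (oddIdx ℓ) := by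
    intro ℓ
    funext γ
    show (if (2*ℓ.val+1)/2 = γ.val then (1:ℝ) else 0)
        = (if (2*ℓ.val)/2 = γ.val then (1:ℝ) else 0)
    have : (2*ℓ.val+1)/2 = (2*ℓ.val)/2 := by omega
    rw [this]
  have hy_odd : ∀ a : ℕ, ∀ ha : a < n,
      y (oddIdx ⟨a, lt_of_lt_of_le ha hnk⟩) = fun β : Fin n => if a = β.val then (1:ℝ) else 0 := by
    intro a ha
    funext β
    show (if (2*a)/2 = β.val then (1:ℝ) else 0) = _
    have : (2*a)/2 = a := by omega
    rw [this]
  -- a matrix is determined by its action on y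
  have key : ∀ M : Matrix (Fin n) (Fin n) ℝ, ∀ α β : Fin n,
      M.mulVec (y (oddIdx ⟨α.val, lt_of_lt_of_le α.isLt hnk⟩)) β = M β α := by
    intro M α β
    rw [hy_odd α.val α.isLt, mulVec_std M α.val α.isLt]
  refine ⟨?_, ?_, ?_⟩
  · intro α β _
    unfold angJ
    apply Finset.sum_eq_zero
    intro ℓ _
    rw [hy_eq ℓ]; ring
  · intro g hg
    ext β α
    have := key (g : Matrix (Fin n) (Fin n) ℝ) α β
    rw [hg] at this
    rw [hy_odd α.val α.isLt] at this
    simp only [Matrix.UnitaryGroup.one_apply, Matrix.one_apply]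
    rw [← this]
    by_cases h : β = α
    · subst h; simp
    · rw [if_neg h]
      exact if_neg (fun h' => h (Fin.ext h'.symm))
  · -- the reflection diag(-1,1,...,1)
    set R : Matrix (Fin n) (Fin n) ℝ :=
      Matrix.diagonal (fun α : Fin n => if α = ⟨0, hn⟩ then (-1:ℝ) else 1) with hR
    have hRo : R ∈ Matrix.orthogonalGroup (Fin n) ℝ := by
      rw [Matrix.mem_orthogonalGroup_iff]
      have : R.transpose = R := by
        simp [hR, Matrix.diagonal_transpose]
      rw [this, hR, Matrix.diagonal_mul_diagonal]
      convert Matrix.diagonal_one using 2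
      funext α
      by_cases h : α = ⟨0, hn⟩ <;> simp [h]
    have hRdet : R.det = -1 := by
      rw [hR, Matrix.det_diagonal]
      rw [Finset.prod_eq_single (⟨0, hn⟩ : Fin n)]
      · simp
      · intro b _ hb; simp [hb]
      · simp
    intro hEq
    -- the reflected point is in the Oₙ-orbit
    have hz : (fun i => Matrix.mulVec R (y i)) ∈
        {z : Fin (2*k) → Fin n → ℝ | ∃ g : Matrix.orthogonalGroup (Fin n) ℝ,
          ∀ i, z i = Matrix.mulVec (g : Matrix (Fin n) (Fin n) ℝ) (y i)} :=
      ⟨⟨R, hRo⟩, fun i => rfl⟩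
    rw [hEq] at hz
    obtain ⟨h, hh⟩ := hz
    -- the matrices R and h agree
    have hMat : R = (h : Matrix (Fin n) (Fin n) ℝ) := by
      ext β α
      have h1 := key R α β
      have h2 := key (h : Matrix (Fin n) (Fin n) ℝ) α β
      rw [← h1, ← h2, ← hh]
    have hdet : (h : Matrix (Fin n) (Fin n) ℝ).det = 1 :=
      (Matrix.mem_specialOrthogonalGroup_iff.mp h.2).2
    rw [← hMat, hRdet] at hdet
    norm_num at hdet
end

section
/- Let n ≥ 2, k ≥ 1. With D_{i,j} = Q_{n,i,j} − Q_{n-1,i,j} denoting the difference of the quadratic invariants computed in ℝⁿ and in the first n−1 coordinates, one has Σ_{ℓ=1}^{k} D_{2ℓ-1,2ℓ} = Σ_{α=1}^{n-1} J_{α,n}², where J_{α,n} = Σ_{ℓ=1}^{k}(y_{2ℓ-1,α} y_{2ℓ,n} − y_{2ℓ-1,n} y_{2ℓ,α}). -/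
open Finset

/-- Truncated inner product using only the first `n-1` coordinates. -/
noncomputable def tip {n : ℕ} (u v : Fin n → ℝ) : ℝ :=
  ∑ α ∈ Finset.univ.filter (fun α : Fin n => α.val < n - 1), u α * v α

/-- The truncated quadratic invariant `Q_{n-1,i,j}`. -/
noncomputable def QinvTrunc {k n : ℕ} (y : Fin (2*k) → Fin n → ℝ) (i j : Fin (2*k)) : ℝ :=
  ∑ ℓ : Fin k, (tip (y i) (y (oddIdx ℓ)) * tip (y j) (y (evenIdx ℓ))
    - tip (y i) (y (evenIdx ℓ)) * tip (y j) (y (oddIdx ℓ)))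

lemma ip_eq_tip_add {n : ℕ} (hn : 2 ≤ n) (u v : Fin n → ℝ) :
    ip u v = tip u v + u ⟨n-1, by omega⟩ * v ⟨n-1, by omega⟩ := by
  unfold ip tip
  rw [← Finset.sum_filter_add_sum_filter_not univ (fun α : Fin n => α.val < n-1)]
  congr 1
  have h : univ.filter (fun α : Fin n => ¬ α.val < n-1) = {(⟨n-1, by omega⟩ : Fin n)} := by
    ext α
    simp only [Finset.mem_filter, Finset.mem_univ, true_and, Finset.mem_singleton,
      Fin.ext_iff]
    have := α.isLt
    omega
  rw [h, Finset.sum_singleton]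

lemma key_s14 {n : ℕ} (hn : 2 ≤ n) (u v u' v' : Fin n → ℝ) :
    ip u u' * ip v v' - ip u v' * ip v u'
      - (tip u u' * tip v v' - tip u v' * tip v u')
    = ∑ α ∈ Finset.univ.filter (fun α : Fin n => α.val < n - 1),
        (u α * v ⟨n-1, by omega⟩ - u ⟨n-1, by omega⟩ * v α)
          * (u' α * v' ⟨n-1, by omega⟩ - u' ⟨n-1, by omega⟩ * v' α) := by
  set N : Fin n := ⟨n-1, by omega⟩
  have expand : ∑ α ∈ Finset.univ.filter (fun α : Fin n => α.val < n - 1),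
      (u α * v N - u N * v α) * (u' α * v' N - u' N * v' α)
      = tip u u' * (v N * v' N) - tip u v' * (v N * u' N)
        - tip v u' * (u N * v' N) + tip v v' * (u N * u' N) := by
    unfold tip
    rw [Finset.sum_mul, Finset.sum_mul, Finset.sum_mul, Finset.sum_mul,
      ← Finset.sum_sub_distrib, ← Finset.sum_sub_distrib, ← Finset.sum_add_distrib]
    apply Finset.sum_congr rfl
    intro α _
    ring
  rw [expand, ip_eq_tip_add hn, ip_eq_tip_add hn, ip_eq_tip_add hn, ip_eq_tip_add hn]
  ring

/-- `Σ_{ℓ=1}^k D_{2ℓ-1,2ℓ} = Σ_{α=1}^{n-1} J_{α,n}²` where `D_{i,j} = Q_{n,i,j} - Q_{n-1,i,j}`. -/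
theorem sum_D_eq_sum_J_sq (n k : ℕ) (hn : 2 ≤ n) (hk : 1 ≤ k)
    (y : Fin (2*k) → Fin n → ℝ) :
    ∑ ℓ : Fin k, (Qinv y (oddIdx ℓ) (evenIdx ℓ) - QinvTrunc y (oddIdx ℓ) (evenIdx ℓ))
      = ∑ α ∈ Finset.univ.filter (fun α : Fin n => α.val < n - 1),
          (angJ y α ⟨n-1, by omega⟩)^2 := by
  set N : Fin n := ⟨n-1, by omega⟩
  have hrhs : ∀ α : Fin n, (angJ y α N)^2
      = ∑ ℓ : Fin k, ∑ m : Fin k,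
          (y (oddIdx ℓ) α * y (evenIdx ℓ) N - y (oddIdx ℓ) N * y (evenIdx ℓ) α)
          * (y (oddIdx m) α * y (evenIdx m) N - y (oddIdx m) N * y (evenIdx m) α) := by
    intro α
    rw [sq]
    unfold angJ
    rw [Finset.sum_mul_sum]
  rw [Finset.sum_congr rfl fun α _ => hrhs α]
  rw [Finset.sum_comm]
  apply Finset.sum_congr rfl
  intro ℓ _
  unfold Qinv QinvTrunc
  rw [← Finset.sum_sub_distrib, Finset.sum_comm]
  apply Finset.sum_congr rfl
  intro m _
  exact key_s14 hn (y (oddIdx ℓ)) (y (evenIdx ℓ)) (y (oddIdx m)) (y (evenIdx m))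
end

section
/- The rational function H(t) = (1 + 4t² + 4t⁴ + t⁶)/(1 − t²)⁶ satisfies the Gorenstein functional equation H(1/t) = (−1)⁶ t⁶ H(t), and its Laurent expansion at t = 1 has leading terms H(t) = (5/32)(1−t)^{−6} + 0·(1−t)^{−5} + (11/128)(1−t)^{−4} + (11/128)(1−t)^{−3} + ⋯. In particular, the leading coefficient 5/32 is not the reciprocal of a positive integer. -/
open Filter

/-- The Hilbert series `H(t) = (1 + 4t² + 4t⁴ + t⁶)/(1-t²)⁶` of `ℝ[M_{0,2,2}]` satisfies the
Gorenstein functional equation `H(1/t) = (-1)⁶ t⁶ H(t)`, its Laurent expansion at `t = 1`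
begins `(5/32)(1-t)⁻⁶ + 0·(1-t)⁻⁵ + (11/128)(1-t)⁻⁴ + (11/128)(1-t)⁻³ + O((1-t)⁻²)`, and
the leading coefficient `5/32` is not the reciprocal of a positive integer. -/
theorem hilbert_series_M022 :
    letI H : ℝ → ℝ := fun t => (1 + 4*t^2 + 4*t^4 + t^6) / (1 - t^2)^6
    (∀ t : ℝ, t ≠ 0 → t^2 ≠ 1 → H (1/t) = (-1)^6 * t^6 * H t) ∧
    (∃ c : ℝ, Tendsto
      (fun t : ℝ => (1-t)^2 *
        (H t - (5/32)*(1-t)^(-6 : ℤ) - (11/128)*(1-t)^(-4 : ℤ) - (11/128)*(1-t)^(-3 : ℤ)))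
      (nhdsWithin 1 {t : ℝ | t ≠ 1}) (nhds c)) ∧
    ¬ ∃ m : ℕ, 0 < m ∧ (5/32 : ℝ) = 1/(m : ℝ) := by
  refine ⟨?_, ?_, ?_⟩
  · intro t ht h2
    have h1 : (1 : ℝ) - t^2 ≠ 0 := sub_ne_zero.mpr (Ne.symm h2)
    have h3 : (1 : ℝ) - (1/t)^2 ≠ 0 := by
      intro hh
      apply h1
      have ht2 : t^2 ≠ 0 := pow_ne_zero 2 ht
      field_simp at hh
      nlinarith [sq_nonneg t]
    show (1 + 4*(1/t)^2 + 4*(1/t)^4 + (1/t)^6) / (1 - (1/t)^2)^6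
        = (-1)^6 * t^6 * ((1 + 4*t^2 + 4*t^4 + t^6) / (1 - t^2)^6)
    rw [show (-1:ℝ)^6 * t^6 * ((1 + 4*t^2 + 4*t^4 + t^6) / (1 - t^2)^6)
        = (t^6 * (1 + 4*t^2 + 4*t^4 + t^6)) / (1 - t^2)^6 by ring,
      div_eq_div_iff (pow_ne_zero 6 h3) (pow_ne_zero 6 h1)]
    field_simp
    ring
  · refine ⟨11/128, ?_⟩
    have key : Tendsto
        (fun t : ℝ => (43/64 + 147/128*t + 15/8*t^2 + 77/64*t^3 + 33/64*t^4 + 11/128*t^5)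
          / (1+t)^6)
        (nhdsWithin 1 {t : ℝ | t ≠ 1}) (nhds (11/128)) := by
      have hc : ContinuousAt
          (fun t : ℝ => (43/64 + 147/128*t + 15/8*t^2 + 77/64*t^3 + 33/64*t^4 + 11/128*t^5)
            / (1+t)^6) 1 := by
        apply ContinuousAt.div
        · fun_prop
        · fun_prop
        · norm_num
      have := hc.continuousWithinAt (s := {t : ℝ | t ≠ 1}).tendsto
      convert this using 2
      norm_num
    refine key.congr' ?_
    have hmem : Set.Ioo (0:ℝ) 2 ∈ nhdsWithin (1:ℝ) {t : ℝ | t ≠ 1} :=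
      nhdsWithin_le_nhds (isOpen_Ioo.mem_nhds (by norm_num))
    filter_upwards [hmem, self_mem_nhdsWithin] with t ht hne
    have h1 : (1:ℝ) - t ≠ 0 := sub_ne_zero.mpr (Ne.symm hne)
    have h2 : (1:ℝ) + t ≠ 0 := ne_of_gt (by linarith [ht.1])
    simp only [zpow_neg, zpow_ofNat]
    have h3 : ((1:ℝ) - t^2)^6 ≠ 0 := by
      rw [show (1:ℝ) - t^2 = (1-t)*(1+t) by ring]
      exact pow_ne_zero _ (mul_ne_zero h1 h2)
    have h4 : (1:ℝ) - t^2 ≠ 0 := by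
      rw [show (1:ℝ) - t^2 = (1-t)*(1+t) by ring]
      exact mul_ne_zero h1 h2
    field_simp
    ring
  · rintro ⟨m, hm, h⟩
    have hm' : (m : ℝ) ≠ 0 := Nat.cast_ne_zero.mpr hm.ne'
    field_simp at h
    have : (5 * m : ℕ) = 32 := by exact_mod_cast h
    omega
end

section
/- Let n ≥ k ≥ 1 and m ≥ k. Then the graded ℝ-algebras ℝ[x_{i,j} : 1 ≤ i ≤ j ≤ 2k]/I_n and ℝ[x_{i,j} : 1 ≤ i ≤ j ≤ 2k]/I_m are equal, where I_n is the real radical of the ideal generated by Q_{i,j} = Σ_{ℓ=1}^{k}(x_{i,2ℓ-1} x_{j,2ℓ} − x_{i,2ℓ} x_{j,2ℓ-1}) (with x_{j,i} := x_{i,j} for j > i); i.e., the defining ideal of the symplectic quotient M_{0,k,n} at zero angular momentum is independent of n for n ≥ k. -/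
open Finset

namespace SymplecticAux

lemma oddIdx_ne_evenIdx {k : ℕ} (ℓ ℓ' : Fin k) : oddIdx ℓ ≠ evenIdx ℓ' := by
  simp only [oddIdx, evenIdx, Fin.mk.injEq, ne_eq]
  omega

lemma evenIdx_inj {k : ℕ} {a b : Fin k} (h : evenIdx a = evenIdx b) : a = b := by
  simp only [evenIdx, Fin.mk.injEq] at h
  exact Fin.ext (by omega)

lemma oddIdx_inj {k : ℕ} {a b : Fin k} (h : oddIdx a = oddIdx b) : a = b := by
  simp only [oddIdx, Fin.mk.injEq] at h
  exact Fin.ext (by omega)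

lemma idx_cases {k : ℕ} (j : Fin (2*k)) : (∃ ℓ, j = oddIdx ℓ) ∨ ∃ ℓ, j = evenIdx ℓ := by
  rcases Nat.even_or_odd j.val with ⟨t, ht⟩ | ⟨t, ht⟩
  · exact Or.inl ⟨⟨t, by omega⟩, Fin.ext (by simp only [oddIdx]; omega)⟩
  · exact Or.inr ⟨⟨t, by omega⟩, Fin.ext (by simp only [evenIdx]; omega)⟩

lemma angJ_swap {k n : ℕ} (y : Fin (2*k) → Fin n → ℝ) (α β : Fin n) :
    angJ y β α = - angJ y α β := by
  unfold angJ
  rw [← Finset.sum_neg_distrib]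
  exact Finset.sum_congr rfl fun ℓ _ => by ring

lemma angJ_all {k n : ℕ} (y : Fin (2*k) → Fin n → ℝ)
    (hJ : ∀ α β : Fin n, α < β → angJ y α β = 0) (α β : Fin n) : angJ y α β = 0 := by
  rcases lt_trichotomy α β with h | h | h
  · exact hJ α β h
  · subst h; unfold angJ; simp
  · rw [angJ_swap, hJ β α h, neg_zero]

/-- Key expansion lemma: bilinear combinations of the rows of the angular momentum vanish. -/
lemma key {k n : ℕ} (y : Fin (2*k) → Fin n → ℝ)
    (hJ : ∀ α β : Fin n, angJ y α β = 0) (c d : Fin n → ℝ) :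
    ∑ ℓ : Fin k, ((∑ γ, y (oddIdx ℓ) γ * c γ) * (∑ δ, y (evenIdx ℓ) δ * d δ)
      - (∑ γ, y (evenIdx ℓ) γ * c γ) * (∑ δ, y (oddIdx ℓ) δ * d δ)) = 0 := by
  have hterm : ∀ ℓ : Fin k,
      ((∑ γ, y (oddIdx ℓ) γ * c γ) * (∑ δ, y (evenIdx ℓ) δ * d δ)
        - (∑ γ, y (evenIdx ℓ) γ * c γ) * (∑ δ, y (oddIdx ℓ) δ * d δ))
      = ∑ γ, ∑ δ, (c γ * d δ) *
          (y (oddIdx ℓ) γ * y (evenIdx ℓ) δ - y (oddIdx ℓ) δ * y (evenIdx ℓ) γ) := by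
    intro ℓ
    rw [Finset.sum_mul_sum, Finset.sum_mul_sum, ← Finset.sum_sub_distrib]
    refine Finset.sum_congr rfl fun γ _ => ?_
    rw [← Finset.sum_sub_distrib]
    exact Finset.sum_congr rfl fun δ _ => by ring
  calc ∑ ℓ : Fin k, ((∑ γ, y (oddIdx ℓ) γ * c γ) * (∑ δ, y (evenIdx ℓ) δ * d δ)
      - (∑ γ, y (evenIdx ℓ) γ * c γ) * (∑ δ, y (oddIdx ℓ) δ * d δ))
      = ∑ ℓ : Fin k, ∑ γ, ∑ δ, (c γ * d δ) *
          (y (oddIdx ℓ) γ * y (evenIdx ℓ) δ - y (oddIdx ℓ) δ * y (evenIdx ℓ) γ) :=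
        Finset.sum_congr rfl fun ℓ _ => hterm ℓ
    _ = ∑ γ, ∑ ℓ : Fin k, ∑ δ, (c γ * d δ) *
          (y (oddIdx ℓ) γ * y (evenIdx ℓ) δ - y (oddIdx ℓ) δ * y (evenIdx ℓ) γ) :=
        Finset.sum_comm
    _ = ∑ γ, ∑ δ, ∑ ℓ : Fin k, (c γ * d δ) *
          (y (oddIdx ℓ) γ * y (evenIdx ℓ) δ - y (oddIdx ℓ) δ * y (evenIdx ℓ) γ) :=
        Finset.sum_congr rfl fun γ _ => Finset.sum_comm
    _ = ∑ γ, ∑ δ, (c γ * d δ) * angJ y γ δ := by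
        refine Finset.sum_congr rfl fun γ _ => Finset.sum_congr rfl fun δ _ => ?_
        rw [angJ, Finset.mul_sum]
    _ = 0 := by
        refine Finset.sum_eq_zero fun γ _ => Finset.sum_eq_zero fun δ _ => ?_
        rw [hJ γ δ, mul_zero]

/-- The standard symplectic bilinear form on `ℝ^{2k}`. -/
noncomputable def Omega (k : ℕ) : LinearMap.BilinForm ℝ (Fin (2*k) → ℝ) :=
  LinearMap.mk₂ ℝ
    (fun a b => ∑ ℓ : Fin k, (a (oddIdx ℓ) * b (evenIdx ℓ) - a (evenIdx ℓ) * b (oddIdx ℓ)))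
    (fun a a' b => by
      rw [← Finset.sum_add_distrib]
      exact Finset.sum_congr rfl fun ℓ _ => by simp only [Pi.add_apply]; ring)
    (fun c a b => by
      rw [smul_eq_mul, Finset.mul_sum]
      exact Finset.sum_congr rfl fun ℓ _ => by simp only [Pi.smul_apply, smul_eq_mul]; ring)
    (fun a b b' => by
      rw [← Finset.sum_add_distrib]
      exact Finset.sum_congr rfl fun ℓ _ => by simp only [Pi.add_apply]; ring)
    (fun c a b => by
      rw [smul_eq_mul, Finset.mul_sum]
      exact Finset.sum_congr rfl fun ℓ _ => by simp only [Pi.smul_apply, smul_eq_mul]; ring)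

lemma Omega_apply {k : ℕ} (a b : Fin (2*k) → ℝ) :
    Omega k a b = ∑ ℓ : Fin k, (a (oddIdx ℓ) * b (evenIdx ℓ) - a (evenIdx ℓ) * b (oddIdx ℓ)) :=
  rfl

lemma Omega_isRefl (k : ℕ) : (Omega k).IsRefl := by
  intro a b h
  have : Omega k b a = - Omega k a b := by
    rw [Omega_apply, Omega_apply, ← Finset.sum_neg_distrib]
    exact Finset.sum_congr rfl fun ℓ _ => by ring
  rw [this, h, neg_zero]

lemma Omega_nondegenerate (k : ℕ) : (Omega k).Nondegenerate := by
  refine ((Omega_isRefl k).nondegenerate_iff_separatingLeft).mpr ?_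
  intro a ha
  have hodd : ∀ ℓ : Fin k, a (oddIdx ℓ) = 0 := by
    intro ℓ
    have h := ha (fun j => if j = evenIdx ℓ then (1:ℝ) else 0)
    rw [Omega_apply, Finset.sum_eq_single ℓ] at h
    · rw [if_pos rfl, if_neg (oddIdx_ne_evenIdx ℓ ℓ)] at h
      linarith
    · intro ℓ' _ hne
      rw [if_neg (fun hc => hne (evenIdx_inj hc)), if_neg (oddIdx_ne_evenIdx ℓ' ℓ)]
      ring
    · intro h; exact absurd (Finset.mem_univ ℓ) h
  have heven : ∀ ℓ : Fin k, a (evenIdx ℓ) = 0 := by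
    intro ℓ
    have h := ha (fun j => if j = oddIdx ℓ then (1:ℝ) else 0)
    rw [Omega_apply, Finset.sum_eq_single ℓ] at h
    · rw [if_pos rfl, if_neg (fun hc => (oddIdx_ne_evenIdx ℓ ℓ) hc.symm)] at h
      linarith
    · intro ℓ' _ hne
      rw [if_neg (fun hc => (oddIdx_ne_evenIdx ℓ ℓ') hc.symm),
        if_neg (fun hc => hne (oddIdx_inj hc))]
      ring
    · intro h; exact absurd (Finset.mem_univ ℓ) h
  funext j
  rcases idx_cases j with ⟨ℓ, rfl⟩ | ⟨ℓ, rfl⟩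
  · exact hodd ℓ
  · exact heven ℓ

/-- The "dual coordinates" linear map `v ↦ (⟨y i, v⟩)_i`. -/
noncomputable def Phi {k n : ℕ} (y : Fin (2*k) → Fin n → ℝ) :
    (Fin n → ℝ) →ₗ[ℝ] (Fin (2*k) → ℝ) where
  toFun v := fun i => ∑ γ, y i γ * v γ
  map_add' u v := by
    funext i
    simp only [Pi.add_apply, mul_add]
    rw [← Finset.sum_add_distrib]
  map_smul' c v := by
    funext i
    simp only [Pi.smul_apply, smul_eq_mul, RingHom.id_apply]
    rw [Finset.mul_sum]
    exact Finset.sum_congr rfl fun γ _ => by ring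

/-- Rank bound: at zero angular momentum the span of the `y i` has dimension at most `k`. -/
lemma finrank_span_le {k n : ℕ} (y : Fin (2*k) → Fin n → ℝ)
    (hJ : ∀ α β : Fin n, angJ y α β = 0) :
    Module.finrank ℝ (Submodule.span ℝ (Set.range
      (fun i => WithLp.toLp 2 (y i) : Fin (2*k) → EuclideanSpace ℝ (Fin n)))) ≤ k := by
  classical
  set E := EuclideanSpace ℝ (Fin n)
  set V : Submodule ℝ E := Submodule.span ℝ (Set.range (fun i => WithLp.toLp 2 (y i) : Fin (2*k) → E)) with hV
  -- the restriction of Phi to V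
  set Φ' : V →ₗ[ℝ] (Fin (2*k) → ℝ) :=
    { toFun := fun v => Phi y (v : E)
      map_add' := fun u v => by simp only [Submodule.coe_add]; exact map_add (Phi y) _ _
      map_smul' := fun c v => by
        simp only [SetLike.val_smul, RingHom.id_apply]; exact map_smul (Phi y) c _ } with hΦ'
  have hinj : Function.Injective Φ' := by
    rw [← LinearMap.ker_eq_bot]
    rw [Submodule.eq_bot_iff]
    rintro ⟨v, hv⟩ hker
    have hzero : ∀ i, ∑ γ, y i γ * v γ = 0 := by
      intro i
      have := congrFun (LinearMap.mem_ker.mp hker) i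
      exact this
    have hall : ∀ u ∈ V, ∑ γ, (u : Fin n → ℝ) γ * v γ = 0 := by
      intro u hu
      induction hu using Submodule.span_induction with
      | mem u hu => obtain ⟨i, rfl⟩ := hu; exact hzero i
      | zero =>
          have h0 : ∀ γ, ((0 : E)) γ = 0 := fun _ => rfl
          simp only [h0, zero_mul, Finset.sum_const_zero]
      | add u w _ _ hu hw =>
          have : ∀ γ, ((u + w : E)) γ = (u : Fin n → ℝ) γ + (w : Fin n → ℝ) γ := fun γ => rfl
          simp only [this, add_mul]
          rw [Finset.sum_add_distrib, hu, hw, add_zero]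
      | smul c u _ hu =>
          have : ∀ γ, ((c • u : E)) γ = c * (u : Fin n → ℝ) γ := fun γ => rfl
          simp only [this, mul_assoc]
          rw [← Finset.mul_sum, hu, mul_zero]
    have hvv : ∑ γ, v γ * v γ = 0 := hall v hv
    have : ∀ γ ∈ Finset.univ, v γ * v γ = 0 :=
      (Finset.sum_eq_zero_iff_of_nonneg (fun γ _ => mul_self_nonneg (v γ))).mp hvv
    have hv0 : (v : Fin n → ℝ) = 0 := funext fun γ => mul_self_eq_zero.mp (this γ (Finset.mem_univ γ))
    exact Subtype.ext (WithLp.ofLp_injective 2 hv0)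
  set W := LinearMap.range Φ' with hW
  have hrank : Module.finrank ℝ V = Module.finrank ℝ W :=
    (LinearMap.finrank_range_of_inj hinj).symm
  have hiso : W ≤ (Omega k).orthogonal W := by
    rintro w ⟨u, rfl⟩
    rw [LinearMap.BilinForm.mem_orthogonal_iff]
    rintro w' ⟨u', rfl⟩
    show Omega k (Φ' u') (Φ' u) = 0
    rw [Omega_apply]
    exact key y hJ (u' : E) (u : E)
  have hle : Module.finrank ℝ W ≤ Module.finrank ℝ ((Omega k).orthogonal W) :=
    Submodule.finrank_mono hiso
  have horth : Module.finrank ℝ ((Omega k).orthogonal W)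
      = Module.finrank ℝ (Fin (2*k) → ℝ) - Module.finrank ℝ W :=
    LinearMap.BilinForm.finrank_orthogonal (Omega_nondegenerate k) W
  have hfr : Module.finrank ℝ (Fin (2*k) → ℝ) = 2*k := Module.finrank_fin_fun ℝ
  have hWle := Submodule.finrank_le (R := ℝ) W
  rw [hfr] at hWle horth
  rw [horth] at hle
  have h2 : Module.finrank ℝ W + Module.finrank ℝ W ≤ 2*k :=
    (Nat.le_sub_iff_add_le hWle).mp hle
  exact le_trans (le_of_eq hrank) (by omega)


lemma sum_dite_lt {d m : ℕ} (hdm : d ≤ m) (F : Fin d → ℝ) :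
    ∑ j : Fin m, (if h : (j : ℕ) < d then F ⟨j, h⟩ else 0) = ∑ i : Fin d, F i := by
  set g : ℕ → ℝ := fun j => if h : j < d then F ⟨j, h⟩ else 0 with hg
  have h1 : ∑ j : Fin m, (if h : (j : ℕ) < d then F ⟨j, h⟩ else 0) = ∑ j ∈ Finset.range m, g j :=
    Fin.sum_univ_eq_sum_range g m
  have h2 : ∑ j ∈ Finset.range m, g j = ∑ j ∈ Finset.range d, g j := by
    refine (Finset.sum_subset (Finset.range_subset_range.mpr hdm) fun x _ hx => ?_).symm
    rw [Finset.mem_range, not_lt] at hx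
    exact dif_neg (not_lt.mpr hx)
  have h3 : ∑ j ∈ Finset.range d, g j = ∑ i : Fin d, F i := by
    rw [← Fin.sum_univ_eq_sum_range g d]
    exact Finset.sum_congr rfl fun i _ => by rw [hg]; simp only [dif_pos i.isLt, Fin.eta]
  rw [h1, h2, h3]

/-- Realize a zero-angular-momentum configuration with the same Gram matrix in `ℝᵐ`. -/
lemma exists_model {k n : ℕ} (m : ℕ) (hm : k ≤ m) (y : Fin (2*k) → Fin n → ℝ)
    (hJ : ∀ α β : Fin n, α < β → angJ y α β = 0) :
    ∃ y' : Fin (2*k) → Fin m → ℝ, (∀ α β : Fin m, α < β → angJ y' α β = 0) ∧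
      ∀ i j, ip (y' i) (y' j) = ip (y i) (y j) := by
  classical
  have hJ' : ∀ α β : Fin n, angJ y α β = 0 := angJ_all y hJ
  set V : Submodule ℝ (EuclideanSpace ℝ (Fin n)) :=
    Submodule.span ℝ (Set.range (fun i => WithLp.toLp 2 (y i) : Fin (2*k) → EuclideanSpace ℝ (Fin n))) with hVdef
  set d : ℕ := Module.finrank ℝ V with hd
  have hdm : d ≤ m := le_trans (finrank_span_le y hJ') hm
  set B := stdOrthonormalBasis ℝ ↥V with hB
  set P := V.orthogonalProjectionOnto.comp (EuclideanSpace.equiv (Fin n) ℝ).symm.toContinuousLinearMap with hP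
  set T : (Fin n → ℝ) →ₗ[ℝ] (Fin m → ℝ) :=
    { toFun := fun v => fun j => if h : (j : ℕ) < d then B.repr (P v) ⟨j, h⟩ else 0
      map_add' := fun u v => by
        funext j
        by_cases h : (j : ℕ) < d
        · simp only [Pi.add_apply, dif_pos h, map_add, PiLp.add_apply]
        · simp only [Pi.add_apply, dif_neg h, add_zero]
      map_smul' := fun c v => by
        funext j
        by_cases h : (j : ℕ) < d
        · simp only [Pi.smul_apply, dif_pos h, map_smul, PiLp.smul_apply, smul_eq_mul,
            RingHom.id_apply]
        · simp only [Pi.smul_apply, dif_neg h, smul_eq_mul, mul_zero, RingHom.id_apply] } with hT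
  have hmem : ∀ i, WithLp.toLp 2 (y i) ∈ V :=
    fun i => Submodule.subset_span ⟨i, rfl⟩
  have hTapp : ∀ (v : Fin n → ℝ) (j : Fin m),
      T v j = if h : (j : ℕ) < d then B.repr (P v) ⟨j, h⟩ else 0 := fun _ _ => rfl
  refine ⟨fun i => T (y i), ?_, ?_⟩
  · -- zero angular momentum is preserved
    have hrep : ∀ (v : Fin n → ℝ) (α : Fin m),
        T v α = ∑ γ, v γ * T (fun j => if γ = j then 1 else 0) α := by
      intro v α
      conv_lhs => rw [pi_eq_sum_univ v, map_sum]
      rw [Finset.sum_apply]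
      exact Finset.sum_congr rfl fun γ _ => by
        rw [map_smul, Pi.smul_apply, smul_eq_mul]
    intro α β _
    have hkey := key y hJ' (fun γ => T (fun j => if γ = j then 1 else 0) α)
      (fun γ => T (fun j => if γ = j then 1 else 0) β)
    show (∑ ℓ : Fin k, (T (y (oddIdx ℓ)) α * T (y (evenIdx ℓ)) β
      - T (y (oddIdx ℓ)) β * T (y (evenIdx ℓ)) α)) = 0
    refine Eq.trans (Finset.sum_congr rfl fun ℓ _ => ?_) hkey
    rw [hrep (y (oddIdx ℓ)) α, hrep (y (evenIdx ℓ)) β, hrep (y (oddIdx ℓ)) β,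
      hrep (y (evenIdx ℓ)) α]
    ring
  · -- the Gram matrix is preserved
    intro i j
    have hproj : ∀ i, P (y i) = ⟨WithLp.toLp 2 (y i), hmem i⟩ := by
      intro i
      exact V.orthogonalProjectionOnto_mem_subspace_eq_self ⟨WithLp.toLp 2 (y i), hmem i⟩
    have step1 : ip (T (y i)) (T (y j))
        = ∑ β : Fin d, (B.repr (P (y i))) β * (B.repr (P (y j))) β := by
      rw [ip]
      have hsum : ∀ α : Fin m, T (y i) α * T (y j) α
          = if h : (α : ℕ) < d then
              (B.repr (P (y i))) ⟨α, h⟩ * (B.repr (P (y j))) ⟨α, h⟩ else 0 := by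
        intro α
        rw [hTapp, hTapp]
        by_cases h : (α : ℕ) < d
        · rw [dif_pos h, dif_pos h, dif_pos h]
        · rw [dif_neg h, dif_neg h, dif_neg h, mul_zero]
      rw [Finset.sum_congr rfl fun α _ => hsum α]
      exact sum_dite_lt hdm (fun β => B.repr (P (y i)) β * B.repr (P (y j)) β)
    have step2 : (∑ β : Fin d, (B.repr (P (y i))) β * (B.repr (P (y j))) β)
        = inner (𝕜 := ℝ) (B.repr (P (y i))) (B.repr (P (y j))) := by
      rw [PiLp.inner_apply]
      exact Finset.sum_congr rfl fun β _ => by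
        rw [RCLike.inner_apply, starRingEnd_apply, star_trivial, mul_comm]
    have step3 : inner (𝕜 := ℝ) (B.repr (P (y i))) (B.repr (P (y j)))
        = inner (𝕜 := ℝ) (P (y i)) (P (y j)) :=
      B.repr.inner_map_map _ _
    have step4 : inner (𝕜 := ℝ) (P (y i)) (P (y j)) = ip (y i) (y j) := by
      rw [hproj i, hproj j, Submodule.coe_inner, PiLp.inner_apply, ip]
      exact Finset.sum_congr rfl fun γ _ => by
        rw [RCLike.inner_apply, starRingEnd_apply, star_trivial]; exact mul_comm _ _
    rw [step1, step2, step3, step4]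

end SymplecticAux

/-- For `n, m ≥ k`, the vanishing ideal (in the polynomial ring on the variables
`x_{i,j}`) of the image of the zero angular momentum set of `k` particles in `ℝⁿ` under the
Hilbert map `y ↦ (⟨y_i, y_j⟩)_{i,j}` is independent of `n`: the defining ideal of the
symplectic quotient `M_{0,k,n}` is the same for all `n ≥ k`. -/
theorem defining_ideal_independent_of_n (k n m : ℕ) (hk : 1 ≤ k)
    (hn : k ≤ n) (hm : k ≤ m) :
    {f : MvPolynomial (Fin (2*k) × Fin (2*k)) ℝ |
      ∀ y : Fin (2*k) → Fin n → ℝ, (∀ α β : Fin n, α < β → angJ y α β = 0) →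
        MvPolynomial.eval (fun p => ip (y p.1) (y p.2)) f = 0}
    = {f : MvPolynomial (Fin (2*k) × Fin (2*k)) ℝ |
      ∀ y : Fin (2*k) → Fin m → ℝ, (∀ α β : Fin m, α < β → angJ y α β = 0) →
        MvPolynomial.eval (fun p => ip (y p.1) (y p.2)) f = 0} := by
  ext f
  simp only [Set.mem_setOf_eq]
  constructor
  · intro h y hJy
    obtain ⟨y', hJ', hG⟩ := SymplecticAux.exists_model n hn y hJy
    rw [show (fun p : Fin (2*k) × Fin (2*k) => ip (y p.1) (y p.2))
        = fun p => ip (y' p.1) (y' p.2) from funext fun p => (hG p.1 p.2).symm]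
    exact h y' hJ'
  · intro h y hJy
    obtain ⟨y', hJ', hG⟩ := SymplecticAux.exists_model m hm y hJy
    rw [show (fun p : Fin (2*k) × Fin (2*k) => ip (y p.1) (y p.2))
        = fun p => ip (y' p.1) (y' p.2) from funext fun p => (hG p.1 p.2).symm]
    exact h y' hJ'
end
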